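/- arXiv:0709.1235 — 4 statements merged into one kernel-verified Lean document; each statement's English description precedes it below -/
import Mathlib

section
/- Let 0 < α ≤ ∞, n ∈ ℕ with n ≥ 3, and let f be a real function on (-α,α). Then f is S-monotone of order n if and only if f is differentiable on (-α,α) and its derivative f' is S-positive of order n. -/
open Matrix

/-- `x` lies in the open interval `(-a, a)`, where `a ∈ (0, ∞]` is an extended real. -/
def MemI (a : EReal) (x : ℝ) : Prop := -a < (x : EReal) ∧ (x : EReal) < a

/-- `x` lies in the open interval `(0, a)`. -/
def MemP (a : EReal) (x : ℝ) : Prop := 0 < x ∧ (x : EReal) < a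

/-- All entries of the matrix `A` lie in `(-a, a)`. -/
def EntriesIn (a : EReal) {n : ℕ} (A : Matrix (Fin n) (Fin n) ℝ) : Prop :=
  ∀ i j, MemI a (A i j)

/-- `f` is S-positive (Schur positive) of order `n` on `(-a, a)`. -/
def SPos (a : EReal) (f : ℝ → ℝ) (n : ℕ) : Prop :=
  ∀ A : Matrix (Fin n) (Fin n) ℝ, EntriesIn a A → A.PosSemidef → (A.map f).PosSemidef

/-- `f` is S-monotone (Schur monotone) of order `n` on `(-a, a)`. -/
def SMono (a : EReal) (f : ℝ → ℝ) (n : ℕ) : Prop :=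
  ∀ A B : Matrix (Fin n) (Fin n) ℝ, A.IsSymm → B.IsSymm →
    EntriesIn a A → EntriesIn a B →
    B.PosSemidef → (A - B).PosSemidef →
    (A.map f - B.map f).PosSemidef

/-- `f` is S-convex (Schur convex) of order `n` on `(-a, a)`. -/
def SConv (a : EReal) (f : ℝ → ℝ) (n : ℕ) : Prop :=
  ∀ A B : Matrix (Fin n) (Fin n) ℝ, A.IsSymm → B.IsSymm →
    EntriesIn a A → EntriesIn a B →
    B.PosSemidef → (A - B).PosSemidef →
    ∀ t : ℝ, 0 ≤ t → t ≤ 1 →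
    (t • A.map f + (1 - t) • B.map f - (t • A + (1 - t) • B).map f).PosSemidef

open Filter


lemma memI_zero {a : EReal} (ha : 0 < a) : MemI a 0 := by
  constructor
  · have h0 : -a < -0 := EReal.neg_lt_neg_iff.2 ha
    simpa using h0
  · simpa using ha

lemma isOpen_memI (a : EReal) : IsOpen {x : ℝ | MemI a x} := by
  have : {x : ℝ | MemI a x} = (fun x : ℝ => (x : EReal)) ⁻¹' (Set.Ioo (-a) a) := rfl
  rw [this]
  exact (isOpen_Ioo).preimage continuous_coe_real_ereal

lemma memI_nhds {a : EReal} {x : ℝ} (hx : MemI a x) : ∀ᶠ y in nhds x, MemI a y :=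
  (isOpen_memI a).mem_nhds hx

lemma memI_ball {a : EReal} {x : ℝ} (hx : MemI a x) :
    ∃ r > 0, ∀ y : ℝ, |y - x| ≤ r → MemI a y := by
  obtain ⟨ε, hε, h⟩ := Metric.eventually_nhds_iff.1 (memI_nhds hx)
  refine ⟨ε/2, by linarith, fun y hy => ?_⟩
  by_cases hxy : y = x
  · simpa [hxy] using hx
  · exact h (by rw [Real.dist_eq]; linarith)

lemma memI_of_between {a : EReal} {x y z : ℝ} (hx : MemI a x) (hy : MemI a y)
    (h1 : x ≤ z) (h2 : z ≤ y) : MemI a z := by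
  constructor
  · exact lt_of_lt_of_le hx.1 (EReal.coe_le_coe_iff.2 h1)
  · exact lt_of_le_of_lt (EReal.coe_le_coe_iff.2 h2) hy.2

lemma smono_of_le {a : EReal} {f : ℝ → ℝ} {n : ℕ} (h : SMono a f n) {m : ℕ} (hm : 0 < m)
    (hmn : m ≤ n) : SMono a f m := by
  intro A B hAs hBs hAe hBe hB hAB
  set g : Fin n → Fin m := fun i => if h2 : (i : ℕ) < m then ⟨i, h2⟩ else ⟨0, hm⟩ with hg
  set s : Fin m → Fin n := fun k => ⟨k, lt_of_lt_of_le k.2 hmn⟩ with hs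
  have hgs : ∀ k, g (s k) = k := by
    intro k
    simp only [hg, hs]
    rw [dif_pos k.2]
  have hsymm : ∀ {M : Matrix (Fin m) (Fin m) ℝ}, M.IsSymm → (M.submatrix g g).IsSymm := by
    intro M hM
    rw [Matrix.IsSymm, Matrix.transpose_submatrix, hM.eq]
  have hsub : ∀ {M N : Matrix (Fin m) (Fin m) ℝ},
      (M.submatrix g g) - (N.submatrix g g) = (M - N).submatrix g g := by
    intro M N; ext i j; simp
  have hres := h (A.submatrix g g) (B.submatrix g g) (hsymm hAs) (hsymm hBs)
    (fun i j => hAe _ _) (fun i j => hBe _ _) (hB.submatrix g)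
    (by rw [hsub]; exact hAB.submatrix g)
  rw [← Matrix.submatrix_map, ← Matrix.submatrix_map, hsub] at hres
  have := hres.submatrix s
  have heq : ((A.map f - B.map f).submatrix g g).submatrix s s = A.map f - B.map f := by
    ext i j
    simp [Matrix.submatrix_apply, hgs]
  rwa [heq] at this

lemma mono_nonneg {a : EReal} {f : ℝ → ℝ} (h : SMono a f 1) {x y : ℝ}
    (hx : 0 ≤ x) (hxy : x ≤ y) (hy : MemI a y) (ha : 0 < a) : f x ≤ f y := by
  have hxm : MemI a x := memI_of_between (memI_zero ha) hy hx hxy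
  have h1 : ∀ z : ℝ, 0 ≤ z → (Matrix.of (fun _ _ : Fin 1 => z)).PosSemidef := by
    intro z hz
    refine Matrix.PosSemidef.of_dotProduct_mulVec_nonneg (by ext i j; fin_cases i; fin_cases j; simp) fun v => ?_
    simp [dotProduct, Matrix.mulVec, Fin.sum_univ_one]
    nlinarith [sq_nonneg (v 0)]
  have hsub : (Matrix.of (fun _ _ : Fin 1 => y)) - (Matrix.of (fun _ _ : Fin 1 => x))
      = Matrix.of (fun _ _ : Fin 1 => y - x) := by ext i j; simp
  have hres := h (Matrix.of (fun _ _ : Fin 1 => y)) (Matrix.of (fun _ _ : Fin 1 => x))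
    (by ext i j; simp) (by ext i j; simp) (fun i j => hy) (fun i j => hxm)
    (h1 x hx) (by rw [hsub]; exact h1 _ (by linarith))
  have := hres.dotProduct_mulVec_nonneg (fun _ => 1)
  simp [dotProduct, Matrix.mulVec, Fin.sum_univ_one, Matrix.map_apply] at this
  linarith

lemma abs_lt_ereal {a : EReal} {x : ℝ} (hx : MemI a x) : ((|x| : ℝ) : EReal) < a := by
  rcases abs_cases x with ⟨h1, _⟩ | ⟨h1, _⟩
  · rw [h1]; exact hx.2
  · rw [h1]
    have := hx.1
    have h2 : ((-x : ℝ) : EReal) = -(x : ℝ) := by simp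
    rw [h2]
    exact EReal.neg_lt_of_neg_lt hx.1

lemma exists_lohi {a : EReal} {x : ℝ} (hx : MemI a x) :
    ∃ lo hi : ℝ, |x| < lo ∧ lo < hi ∧ ((hi : ℝ) : EReal) < a := by
  have h := abs_lt_ereal hx
  induction a with
  | bot => exact absurd h (by simp)
  | coe r =>
    have hr : |x| < r := EReal.coe_lt_coe_iff.1 h
    exact ⟨|x| + (r - |x|)/3, |x| + 2*(r - |x|)/3, by linarith, by linarith,
      EReal.coe_lt_coe_iff.2 (by linarith)⟩
  | top => exact ⟨|x| + 1, |x| + 2, by linarith, by linarith, EReal.coe_lt_top _⟩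

lemma exists_diff_pt {a : EReal} {f : ℝ → ℝ} (ha : 0 < a) (h1 : SMono a f 1) {x : ℝ}
    (hx : MemI a x) : ∃ w : ℝ, |x| < w ∧ MemI a w ∧ DifferentiableAt ℝ f w := by
  obtain ⟨lo, hi, hlo, hlohi, hhi⟩ := exists_lohi hx
  have hlo0 : 0 ≤ lo := (abs_nonneg x).trans hlo.le
  have hhiI : MemI a hi := by
    refine ⟨?_, hhi⟩
    have h0 : MemI a 0 := memI_zero ha
    exact lt_of_lt_of_le h0.1 (EReal.coe_le_coe_iff.2 (by linarith))
  set g : ℝ → ℝ := fun t => f (min (max t lo) hi) with hgdef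
  have hg : Monotone g := by
    intro t1 t2 ht
    have hc1 : lo ≤ min (max t1 lo) hi := le_min (le_max_right _ _) hlohi.le
    have hc2 : min (max t1 lo) hi ≤ min (max t2 lo) hi :=
      min_le_min (max_le_max ht le_rfl) le_rfl
    have hc3 : min (max t2 lo) hi ≤ hi := min_le_right _ _
    exact mono_nonneg h1 (by linarith) hc2
      (memI_of_between (memI_zero ha) hhiI (by linarith) hc3) ha
  have hae := hg.ae_differentiableAt
  have hne : ∃ w ∈ Set.Ioo lo hi, DifferentiableAt ℝ g w := by
    by_contra hcon
    push_neg at hcon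
    have hsub : Set.Ioo lo hi ⊆ {t | ¬ DifferentiableAt ℝ g t} := fun t ht => hcon t ht
    have h0 : MeasureTheory.volume {t | ¬ DifferentiableAt ℝ g t} = 0 := hae
    have := MeasureTheory.measure_mono_null hsub h0
    rw [Real.volume_Ioo] at this
    have : hi - lo ≤ 0 := by
      by_contra hc
      push_neg at hc
      simp [ENNReal.ofReal_eq_zero] at this
      linarith
    linarith
  obtain ⟨w, hw, hgd⟩ := hne
  have heq : f =ᶠ[nhds w] g := by
    filter_upwards [isOpen_Ioo.mem_nhds hw] with y hy
    simp only [hgdef]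
    rw [max_eq_left hy.1.le, min_eq_left hy.2.le]
  refine ⟨w, hlo.trans hw.1, memI_of_between (memI_zero ha) hhiI (by linarith [hw.1]) hw.2.le, ?_⟩
  exact (heq.differentiableAt_iff).2 hgd

lemma vecMulVec_posSemidef {n : ℕ} (v : Fin n → ℝ) : (Matrix.vecMulVec v v).PosSemidef := by
  refine Matrix.PosSemidef.of_dotProduct_mulVec_nonneg ?_ ?_
  · ext i j
    simp [Matrix.vecMulVec_apply, Matrix.conjTranspose_apply, mul_comm]
  · intro y
    have hcalc : dotProduct (star y) (Matrix.vecMulVec v v *ᵥ y)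
        = (∑ i, v i * y i)^2 := by
      simp only [Matrix.vecMulVec_apply, Matrix.mulVec, dotProduct, star_trivial]
      rw [sq, Finset.sum_mul_sum]
      refine Finset.sum_congr rfl fun i _ => ?_
      rw [Finset.mul_sum]
      refine Finset.sum_congr rfl fun j _ => ?_
      ring
    rw [hcalc]
    positivity

lemma quadform_three (M : Matrix (Fin 3) (Fin 3) ℝ) (y : Fin 3 → ℝ) :
    dotProduct (star y) (M *ᵥ y) =
      y 0 * M 0 0 * y 0 + y 0 * M 0 1 * y 1 + y 0 * M 0 2 * y 2
    + y 1 * M 1 0 * y 0 + y 1 * M 1 1 * y 1 + y 1 * M 1 2 * y 2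
    + y 2 * M 2 0 * y 0 + y 2 * M 2 1 * y 1 + y 2 * M 2 2 * y 2 := by
  simp [dotProduct, Matrix.mulVec, Fin.sum_univ_three]
  ring

set_option maxHeartbeats 1000000 in
lemma key_ineq {a : EReal} {f : ℝ → ℝ} (h3 : SMono a f 3) {w x : ℝ}
    (hw : MemI a w) (hx : MemI a x) (hxw : |x| ≤ w)
    {τ δ δ' σ : ℝ} (hτ : τ ≠ 0) (hδ : δ ≠ 0) (hδ' : δ' ≠ 0)
    (m1 : MemI a (w + τ*τ)) (m2 : MemI a (x + δ)) (m3 : MemI a (x + δ'))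
    (m4 : MemI a (w + δ*δ/(τ*τ))) (m5 : MemI a (w + δ'*δ'/(τ*τ)))
    (m6 : MemI a (w + δ*δ'/(τ*τ))) :
    2*σ*((f (x+δ') - f x)/δ' - (f (x+δ) - f x)/δ) ≤
      (f (w + τ*τ) - f w)
      + σ^2*((f (w + δ*δ/(τ*τ)) - f w)/(δ*δ)
        - 2*((f (w + δ*δ'/(τ*τ)) - f w)/(δ*δ'))
        + (f (w + δ'*δ'/(τ*τ)) - f w)/(δ'*δ')) := by
  obtain ⟨hwx1, hwx2⟩ := abs_le.1 hxw
  set B : Matrix (Fin 3) (Fin 3) ℝ := !![w, x, x; x, w, w; x, w, w] with hB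
  set A : Matrix (Fin 3) (Fin 3) ℝ :=
    !![w + τ*τ, x + δ, x + δ';
       x + δ, w + δ*δ/(τ*τ), w + δ*δ'/(τ*τ);
       x + δ', w + δ*δ'/(τ*τ), w + δ'*δ'/(τ*τ)] with hA
  have hAs : A.IsSymm := by
    rw [Matrix.IsSymm]; ext i j; fin_cases i <;> fin_cases j <;> rfl
  have hBs : B.IsSymm := by
    rw [Matrix.IsSymm]; ext i j; fin_cases i <;> fin_cases j <;> rfl
  have hAe : EntriesIn a A := by
    intro i j; fin_cases i <;> fin_cases j <;>
      first | exact m1 | exact m2 | exact m3 | exact m4 | exact m5 | exact m6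
  have hBe : EntriesIn a B := by
    intro i j; fin_cases i <;> fin_cases j <;> first | exact hw | exact hx
  have hBpsd : B.PosSemidef := by
    refine Matrix.PosSemidef.of_dotProduct_mulVec_nonneg ?_ ?_
    · rw [Matrix.IsHermitian]; ext i j; fin_cases i <;> fin_cases j <;>
        simp [hB, Matrix.conjTranspose_apply, Matrix.vecHead, Matrix.vecTail]
    · intro y
      rw [quadform_three]
      have h2 :
          y 0 * B 0 0 * y 0 + y 0 * B 0 1 * y 1 + y 0 * B 0 2 * y 2
        + y 1 * B 1 0 * y 0 + y 1 * B 1 1 * y 1 + y 1 * B 1 2 * y 2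
        + y 2 * B 2 0 * y 0 + y 2 * B 2 1 * y 1 + y 2 * B 2 2 * y 2 =
          ((w+x)*(y 0 + y 1 + y 2)^2 + (w-x)*(y 0 - y 1 - y 2)^2)/2 := by
        show y 0 * w * y 0 + y 0 * x * y 1 + y 0 * x * y 2
          + y 1 * x * y 0 + y 1 * w * y 1 + y 1 * w * y 2
          + y 2 * x * y 0 + y 2 * w * y 1 + y 2 * w * y 2 = _
        ring
      rw [h2]
      nlinarith [sq_nonneg (y 0 + y 1 + y 2), sq_nonneg (y 0 - y 1 - y 2)]
  have hABpsd : (A - B).PosSemidef := by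
    refine Matrix.PosSemidef.of_dotProduct_mulVec_nonneg ?_ ?_
    · rw [Matrix.IsHermitian]; ext i j; fin_cases i <;> fin_cases j <;>
        simp [hA, hB, Matrix.conjTranspose_apply, Matrix.sub_apply, Matrix.vecHead, Matrix.vecTail]
    · intro y
      rw [quadform_three]
      have h2 :
          y 0 * (A-B) 0 0 * y 0 + y 0 * (A-B) 0 1 * y 1 + y 0 * (A-B) 0 2 * y 2
        + y 1 * (A-B) 1 0 * y 0 + y 1 * (A-B) 1 1 * y 1 + y 1 * (A-B) 1 2 * y 2
        + y 2 * (A-B) 2 0 * y 0 + y 2 * (A-B) 2 1 * y 1 + y 2 * (A-B) 2 2 * y 2 =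
          (τ * y 0 + (δ/τ) * y 1 + (δ'/τ) * y 2)^2 := by
        show y 0 * ((w + τ*τ) - w) * y 0 + y 0 * ((x + δ) - x) * y 1 + y 0 * ((x + δ') - x) * y 2
          + y 1 * ((x + δ) - x) * y 0 + y 1 * ((w + δ*δ/(τ*τ)) - w) * y 1
          + y 1 * ((w + δ*δ'/(τ*τ)) - w) * y 2
          + y 2 * ((x + δ') - x) * y 0 + y 2 * ((w + δ*δ'/(τ*τ)) - w) * y 1
          + y 2 * ((w + δ'*δ'/(τ*τ)) - w) * y 2 = _
        field_simp
        ring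
      rw [h2]
      positivity
  have hres := h3 A B hAs hBs hAe hBe hBpsd hABpsd
  have hv := hres.dotProduct_mulVec_nonneg ![1, σ/δ, -(σ/δ')]
  rw [quadform_three] at hv
  set y : Fin 3 → ℝ := ![1, σ/δ, -(σ/δ')] with hy
  have hy0 : y 0 = 1 := rfl
  have hy1 : y 1 = σ/δ := rfl
  have hy2 : y 2 = -(σ/δ') := rfl
  have hM : ∀ i j : Fin 3, (A.map f - B.map f) i j = f (A i j) - f (B i j) := by
    intro i j; simp [Matrix.sub_apply, Matrix.map_apply]
  rw [hM, hM, hM, hM, hM, hM, hM, hM, hM, hy0, hy1, hy2] at hv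
  have eA00 : A 0 0 = w + τ*τ := rfl
  have eA01 : A 0 1 = x + δ := rfl
  have eA02 : A 0 2 = x + δ' := rfl
  have eA10 : A 1 0 = x + δ := rfl
  have eA11 : A 1 1 = w + δ*δ/(τ*τ) := rfl
  have eA12 : A 1 2 = w + δ*δ'/(τ*τ) := rfl
  have eA20 : A 2 0 = x + δ' := rfl
  have eA21 : A 2 1 = w + δ*δ'/(τ*τ) := rfl
  have eA22 : A 2 2 = w + δ'*δ'/(τ*τ) := rfl
  have eB00 : B 0 0 = w := rfl
  have eB01 : B 0 1 = x := rfl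
  have eB02 : B 0 2 = x := rfl
  have eB10 : B 1 0 = x := rfl
  have eB11 : B 1 1 = w := rfl
  have eB12 : B 1 2 = w := rfl
  have eB20 : B 2 0 = x := rfl
  have eB21 : B 2 1 = w := rfl
  have eB22 : B 2 2 = w := rfl
  rw [eA00, eA01, eA02, eA10, eA11, eA12, eA20, eA21, eA22,
    eB00, eB01, eB02, eB10, eB11, eB12, eB20, eB21, eB22] at hv
  have hgoal : (1:ℝ) * (f (w + τ*τ) - f w) * 1 + 1 * (f (x + δ) - f x) * (σ/δ)
      + 1 * (f (x + δ') - f x) * (-(σ/δ'))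
      + (σ/δ) * (f (x + δ) - f x) * 1 + (σ/δ) * (f (w + δ*δ/(τ*τ)) - f w) * (σ/δ)
      + (σ/δ) * (f (w + δ*δ'/(τ*τ)) - f w) * (-(σ/δ'))
      + (-(σ/δ')) * (f (x + δ') - f x) * 1
      + (-(σ/δ')) * (f (w + δ*δ'/(τ*τ)) - f w) * (σ/δ)
      + (-(σ/δ')) * (f (w + δ'*δ'/(τ*τ)) - f w) * (-(σ/δ')) =
      ((f (w + τ*τ) - f w)
      + σ^2*((f (w + δ*δ/(τ*τ)) - f w)/(δ*δ)
        - 2*((f (w + δ*δ'/(τ*τ)) - f w)/(δ*δ'))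
        + (f (w + δ'*δ'/(τ*τ)) - f w)/(δ'*δ')))
      - 2*σ*((f (x+δ') - f x)/δ' - (f (x+δ) - f x)/δ) := by
    field_simp
    ring
  rw [hgoal] at hv
  linarith

lemma little_o_bound {f : ℝ → ℝ} {w : ℝ} (hfw : DifferentiableAt ℝ f w) :
    ∀ κ : ℝ, 0 < κ → ∃ R > 0, ∀ r : ℝ, |r| ≤ R →
      |f (w + r) - f w - (deriv f w) * r| ≤ κ * |r| := by
  intro κ hκ
  have h := hfw.hasDerivAt
  rw [hasDerivAt_iff_isLittleO] at h
  have h2 := h.def hκ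
  rw [Metric.eventually_nhds_iff] at h2
  obtain ⟨ε, hε, hb⟩ := h2
  refine ⟨ε/2, by linarith, fun r hr => ?_⟩
  have hd : dist (w + r) w < ε := by
    rw [Real.dist_eq]
    have : |w + r - w| = |r| := by ring_nf
    rw [this]; linarith [abs_nonneg r]
  have := hb hd
  simp only [Real.norm_eq_abs, smul_eq_mul] at this
  have h3 : w + r - w = r := by ring
  rw [h3] at this
  calc |f (w + r) - f w - deriv f w * r| = |f (w + r) - f w - r * deriv f w| := by ring_nf
  _ ≤ κ * |r| := this

section
variable {a : EReal} {f : ℝ → ℝ}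

set_option maxHeartbeats 1000000 in
lemma cauchy_est (h3 : SMono a f 3) {x w : ℝ} (hx : MemI a x) (hw : MemI a w)
    (hxw : |x| ≤ w) (hfw : DifferentiableAt ℝ f w) :
    ∀ ε : ℝ, 0 < ε → ∃ Δ > 0, ∀ δ δ' : ℝ, δ ≠ 0 → δ' ≠ 0 → |δ| ≤ Δ → |δ'| ≤ Δ →
      (f (x+δ') - f x)/δ' - (f (x+δ) - f x)/δ ≤ ε := by
  intro ε hε
  set L := deriv f w with hL
  set S : ℝ := (|L| + 1)/ε with hS
  have hSpos : 0 < S := by positivity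
  set κ : ℝ := min 1 (ε/(4*S)) with hκdef
  have hκpos : 0 < κ := lt_min one_pos (by positivity)
  have hκ1 : κ ≤ 1 := min_le_left _ _
  have hκ2 : κ ≤ ε/(4*S) := min_le_right _ _
  obtain ⟨R, hR, hρR⟩ := little_o_bound hfw κ hκpos
  obtain ⟨rW, hrW, hballW⟩ := memI_ball hw
  obtain ⟨rX, hrX, hballX⟩ := memI_ball hx
  set m : ℝ := min R rW with hm
  have hmpos : 0 < m := lt_min hR hrW
  have hmR : m ≤ R := min_le_left _ _
  have hmW : m ≤ rW := min_le_right _ _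
  set τ : ℝ := Real.sqrt m with hτdef
  have hτpos : 0 < τ := Real.sqrt_pos.2 hmpos
  have ht : τ * τ = m := Real.mul_self_sqrt hmpos.le
  set Δ : ℝ := min rX m with hΔdef
  have hΔpos : 0 < Δ := lt_min hrX hmpos
  refine ⟨Δ, hΔpos, fun δ δ' hδ0 hδ'0 hδΔ hδ'Δ => ?_⟩
  have hΔm : Δ ≤ m := min_le_right _ _
  have hΔX : Δ ≤ rX := min_le_left _ _
  -- smallness of the perturbation entries
  have hq : ∀ u v : ℝ, |u| ≤ Δ → |v| ≤ Δ → |u*v/(τ*τ)| ≤ m := by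
    intro u v hu hv
    rw [ht, abs_div, abs_of_pos hmpos, div_le_iff₀ hmpos, abs_mul]
    calc |u| * |v| ≤ Δ * Δ := mul_le_mul hu hv (abs_nonneg v) hΔpos.le
    _ ≤ m * m := mul_le_mul hΔm hΔm hΔpos.le hmpos.le
  -- memberships
  have m1 : MemI a (w + τ*τ) := by
    apply hballW; rw [ht]
    have : w + m - w = m := by ring
    rw [this, abs_of_pos hmpos]; exact hmW
  have m2 : MemI a (x + δ) := by
    apply hballX
    have : x + δ - x = δ := by ring
    rw [this]; exact hδΔ.trans hΔX
  have m3 : MemI a (x + δ') := by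
    apply hballX
    have : x + δ' - x = δ' := by ring
    rw [this]; exact hδ'Δ.trans hΔX
  have m4 : MemI a (w + δ*δ/(τ*τ)) := by
    apply hballW
    have : w + δ*δ/(τ*τ) - w = δ*δ/(τ*τ) := by ring
    rw [this]; exact (hq δ δ hδΔ hδΔ).trans hmW
  have m5 : MemI a (w + δ'*δ'/(τ*τ)) := by
    apply hballW
    have : w + δ'*δ'/(τ*τ) - w = δ'*δ'/(τ*τ) := by ring
    rw [this]; exact (hq δ' δ' hδ'Δ hδ'Δ).trans hmW
  have m6 : MemI a (w + δ*δ'/(τ*τ)) := by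
    apply hballW
    have : w + δ*δ'/(τ*τ) - w = δ*δ'/(τ*τ) := by ring
    rw [this]; exact (hq δ δ' hδΔ hδ'Δ).trans hmW
  have hkey0 := key_ineq h3 hw hx hxw hτpos.ne' hδ0 hδ'0 m1 m2 m3 m4 m5 m6 (σ := S * m)
  rw [ht] at hkey0
  -- error terms
  set u1 : ℝ := f (w + m) - f w - L * m with hu1
  set u2 : ℝ := f (w + δ*δ/m) - f w - L * (δ*δ/m) with hu2
  set u5 : ℝ := f (w + δ'*δ'/m) - f w - L * (δ'*δ'/m) with hu5
  set u6 : ℝ := f (w + δ*δ'/m) - f w - L * (δ*δ'/m) with hu6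
  have habs : ∀ u v : ℝ, |u| ≤ Δ → |v| ≤ Δ → |u*v/m| ≤ m := by
    intro u v hu hv
    have := hq u v hu hv
    rwa [ht] at this
  have b1 : |u1| ≤ κ * m := by
    have := hρR m (by rw [abs_of_pos hmpos]; exact hmR)
    rwa [abs_of_pos hmpos] at this
  have b2 : |u2| ≤ κ * (δ*δ/m) := by
    have h := hρR (δ*δ/m) ((habs δ δ hδΔ hδΔ).trans hmR)
    rwa [abs_of_nonneg (div_nonneg (mul_self_nonneg δ) hmpos.le)] at h
  have b5 : |u5| ≤ κ * (δ'*δ'/m) := by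
    have h := hρR (δ'*δ'/m) ((habs δ' δ' hδ'Δ hδ'Δ).trans hmR)
    rwa [abs_of_nonneg (div_nonneg (mul_self_nonneg δ') hmpos.le)] at h
  have b6 : |u6| ≤ κ * |δ*δ'/m| := hρR (δ*δ'/m) ((habs δ δ' hδΔ hδ'Δ).trans hmR)
  have hδδ : (0:ℝ) < δ*δ := mul_self_pos.2 hδ0
  have hδ'δ' : (0:ℝ) < δ'*δ' := mul_self_pos.2 hδ'0
  -- identity for the bracket
  have hid : (f (w + δ*δ/m) - f w)/(δ*δ) - 2*((f (w + δ*δ'/m) - f w)/(δ*δ'))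
      + (f (w + δ'*δ'/m) - f w)/(δ'*δ')
      = u2/(δ*δ) - 2*(u6/(δ*δ')) + u5/(δ'*δ') := by
    rw [hu2, hu5, hu6]
    field_simp
    ring
  -- piecewise bounds
  have c2 : u2/(δ*δ) ≤ κ/m := by
    rw [div_le_div_iff₀ hδδ hmpos]
    have h := (le_abs_self u2).trans b2
    have h2 : κ * (δ*δ/m) * m = κ * (δ*δ) := by
      rw [mul_assoc, div_mul_cancel₀ _ hmpos.ne']
    calc u2 * m ≤ κ * (δ*δ/m) * m := mul_le_mul_of_nonneg_right h hmpos.le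
    _ = κ * (δ*δ) := h2
  have c5 : u5/(δ'*δ') ≤ κ/m := by
    rw [div_le_div_iff₀ hδ'δ' hmpos]
    have h := (le_abs_self u5).trans b5
    have h2 : κ * (δ'*δ'/m) * m = κ * (δ'*δ') := by
      rw [mul_assoc, div_mul_cancel₀ _ hmpos.ne']
    calc u5 * m ≤ κ * (δ'*δ'/m) * m := mul_le_mul_of_nonneg_right h hmpos.le
    _ = κ * (δ'*δ') := h2
  have c6 : -(u6/(δ*δ')) ≤ κ/m := by
    have habs6 : |u6/(δ*δ')| ≤ κ/m := by
      rw [abs_div, div_le_div_iff₀ (abs_pos.2 (mul_ne_zero hδ0 hδ'0)) hmpos]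
      have h2 : κ * |δ*δ'/m| * m = κ * |δ*δ'| := by
        rw [abs_div, abs_of_pos hmpos, mul_assoc, div_mul_cancel₀ _ hmpos.ne']
      calc |u6| * m ≤ κ * |δ*δ'/m| * m := mul_le_mul_of_nonneg_right b6 hmpos.le
      _ = κ * |δ*δ'| := h2
    calc -(u6/(δ*δ')) ≤ |u6/(δ*δ')| := neg_le_abs _
    _ ≤ κ/m := habs6
  have c1 : f (w + m) - f w ≤ (|L| + κ) * m := by
    have h := (le_abs_self u1).trans b1
    have h2 : L * m ≤ |L| * m := mul_le_mul_of_nonneg_right (le_abs_self L) hmpos.le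
    rw [hu1] at h; linarith
  -- assemble
  have hbig : 2*(S*m)*((f (x+δ') - f x)/δ' - (f (x+δ) - f x)/δ)
      ≤ (|L| + κ) * m + (S*m)^2 * (4 * (κ/m)) := by
    have hb : u2/(δ*δ) - 2*(u6/(δ*δ')) + u5/(δ'*δ') ≤ 4 * (κ/m) := by linarith
    have hsq : (0:ℝ) ≤ (S*m)^2 := sq_nonneg _
    calc 2*(S*m)*((f (x+δ') - f x)/δ' - (f (x+δ) - f x)/δ)
        ≤ (f (w + m) - f w) + (S*m)^2 * ((f (w + δ*δ/m) - f w)/(δ*δ)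
          - 2*((f (w + δ*δ'/m) - f w)/(δ*δ')) + (f (w + δ'*δ'/m) - f w)/(δ'*δ')) := by
          exact hkey0
    _ = (f (w + m) - f w) + (S*m)^2 * (u2/(δ*δ) - 2*(u6/(δ*δ')) + u5/(δ'*δ')) := by rw [hid]
    _ ≤ (|L| + κ) * m + (S*m)^2 * (4 * (κ/m)) := by nlinarith [mul_le_mul_of_nonneg_left hb hsq]
  have hSε : S * ε = |L| + 1 := by rw [hS, div_mul_eq_mul_div, mul_div_assoc, div_self hε.ne', mul_one]
  have hC : (|L| + κ) + 4 * κ * S^2 ≤ 2 * S * ε := by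
    have hS0 : S ≠ 0 := hSpos.ne'
    have h2 := mul_le_mul_of_nonneg_right hκ2 (by positivity : (0:ℝ) ≤ 4*S^2)
    have h3 : (ε/(4*S))*(4*S^2) = S*ε := by
      field_simp
    have h4 : κ*(4*S^2) = 4*κ*S^2 := by ring
    linarith [hSε]
  have hexp : (S*m)^2 * (4 * (κ/m)) = (4 * κ * S^2) * m := by
    have hm0 : m ≠ 0 := hmpos.ne'
    field_simp
  rw [hexp] at hbig
  have hfin : 2*(S*m)*((f (x+δ') - f x)/δ' - (f (x+δ) - f x)/δ) ≤ 2*(S*m)*ε := by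
    calc 2*(S*m)*((f (x+δ') - f x)/δ' - (f (x+δ) - f x)/δ)
        ≤ (|L| + κ) * m + (4 * κ * S^2) * m := hbig
    _ = ((|L| + κ) + 4 * κ * S^2) * m := by ring
    _ ≤ (2 * S * ε) * m := mul_le_mul_of_nonneg_right hC hmpos.le
    _ = 2*(S*m)*ε := by ring
  have h2Sm : (0:ℝ) < 2*(S*m) := by positivity
  exact le_of_mul_le_mul_left (by linarith [hfin]) h2Sm

end

lemma diffat_of_smono3 {a : EReal} {f : ℝ → ℝ} (h3 : SMono a f 3) {x w : ℝ}
    (hx : MemI a x) (hw : MemI a w)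
    (hxw : |x| ≤ w) (hfw : DifferentiableAt ℝ f w) : DifferentiableAt ℝ f x := by
  have hkey := cauchy_est h3 hx hw hxw hfw
  set F : ℝ → ℝ := fun δ => (f (x + δ) - f x)/δ with hF
  have hcauchy : Cauchy (Filter.map F (nhdsWithin (0:ℝ) {(0:ℝ)}ᶜ)) := by
    rw [Metric.cauchy_iff]
    refine ⟨Filter.map_neBot, fun ε hε => ?_⟩
    obtain ⟨Δ, hΔ, hest⟩ := hkey (ε/3) (by linarith)
    have hsmem : {δ : ℝ | δ ≠ 0 ∧ |δ| ≤ Δ} ∈ nhdsWithin (0:ℝ) {(0:ℝ)}ᶜ := by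
      rw [Metric.mem_nhdsWithin_iff]
      refine ⟨Δ, hΔ, fun δ hδ => ?_⟩
      obtain ⟨h1, h2⟩ := hδ
      rw [Metric.mem_ball, Real.dist_eq, sub_zero] at h1
      exact ⟨h2, h1.le⟩
    refine ⟨F '' {δ : ℝ | δ ≠ 0 ∧ |δ| ≤ Δ}, Filter.image_mem_map hsmem, ?_⟩
    rintro p ⟨δ, ⟨hδ0, hδΔ⟩, rfl⟩ q ⟨δ', ⟨hδ'0, hδ'Δ⟩, rfl⟩
    rw [Real.dist_eq]
    have e1 := hest δ δ' hδ0 hδ'0 hδΔ hδ'Δ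
    have e2 := hest δ' δ hδ'0 hδ0 hδ'Δ hδΔ
    rw [abs_sub_lt_iff]
    constructor <;> [skip; skip] <;> simp only [hF] <;> linarith
  obtain ⟨c, hc⟩ := CompleteSpace.complete hcauchy
  have htend : Filter.Tendsto F (nhdsWithin (0:ℝ) {(0:ℝ)}ᶜ) (nhds c) := hc
  have hda : HasDerivAt f c x := by
    rw [hasDerivAt_iff_tendsto_slope_zero]
    exact htend.congr (fun t => by rw [hF]; simp [div_eq_inv_mul, smul_eq_mul])
  exact hda.differentiableAt

lemma diffat_all {a : EReal} {f : ℝ → ℝ} (ha : 0 < a) (hn3 : SMono a f 3)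
    (hn1 : SMono a f 1) : ∀ x : ℝ, MemI a x → DifferentiableAt ℝ f x := by
  intro x hx
  obtain ⟨w, hxw, hwI, hfw⟩ := exists_diff_pt ha hn1 hx
  exact diffat_of_smono3 hn3 hx hwI hxw.le hfw

lemma posSemidef_smul_nonneg {n : ℕ} {M : Matrix (Fin n) (Fin n) ℝ} (hM : M.PosSemidef)
    {t : ℝ} (ht : 0 ≤ t) : (t • M).PosSemidef := by
  refine Matrix.PosSemidef.of_dotProduct_mulVec_nonneg ?_ ?_
  · rw [Matrix.IsHermitian]
    ext i j
    have := congrFun (congrFun hM.1 i) j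
    simp only [Matrix.conjTranspose_apply, star_trivial] at this ⊢
    simp [Matrix.smul_apply, this]
  · intro y
    have h := hM.dotProduct_mulVec_nonneg y
    have : dotProduct (star y) ((t • M) *ᵥ y)
        = t * dotProduct (star y) (M *ᵥ y) := by
      simp [Matrix.smul_mulVec, dotProduct_smul]
    rw [this]
    exact mul_nonneg ht h

lemma spos_deriv_of_smono {a : EReal} {f : ℝ → ℝ} {n : ℕ} (ha : 0 < a)
    (hd : ∀ x : ℝ, MemI a x → DifferentiableAt ℝ f x) (hm : SMono a f n) :
    SPos a (deriv f) n := by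
  intro A hAe hA
  have hsymm : ∀ i j, A j i = A i j := by
    intro i j
    have := congrFun (congrFun hA.1 i) j
    simpa [Matrix.conjTranspose_apply] using this
  refine Matrix.PosSemidef.of_dotProduct_mulVec_nonneg ?_ ?_
  · rw [Matrix.IsHermitian]
    ext i j
    simp [Matrix.conjTranspose_apply, Matrix.map_apply, hsymm i j]
  · intro z
    set g : ℝ → ℝ := fun t => ∑ p : Fin n × Fin n, f (A p.1 p.2 + t * (z p.1 * z p.2))
      with hg
    set d : ℝ := ∑ p : Fin n × Fin n, deriv f (A p.1 p.2) * (z p.1 * z p.2) with hd'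
    have hgd : HasDerivAt g d 0 := by
      apply HasDerivAt.fun_sum
      intro p _
      have h1 : HasDerivAt (fun t : ℝ => A p.1 p.2 + t * (z p.1 * z p.2))
          (z p.1 * z p.2) 0 := by
        simpa using ((hasDerivAt_id (0:ℝ)).mul_const (z p.1 * z p.2)).const_add (A p.1 p.2)
      have h2 : HasDerivAt f (deriv f (A p.1 p.2)) (A p.1 p.2 + 0 * (z p.1 * z p.2)) := by
        simpa using (hd _ (hAe p.1 p.2)).hasDerivAt
      exact h2.comp 0 h1
    have hev : ∀ᶠ t in nhdsWithin (0:ℝ) (Set.Ioi 0), g 0 ≤ g t := by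
      have hent : ∀ᶠ t in nhds (0:ℝ), ∀ p : Fin n × Fin n,
          MemI a (A p.1 p.2 + t * (z p.1 * z p.2)) := by
        rw [Filter.eventually_all]
        intro p
        have hc : ContinuousAt (fun t : ℝ => A p.1 p.2 + t * (z p.1 * z p.2)) 0 := by
          fun_prop
        have h0 : (fun t : ℝ => A p.1 p.2 + t * (z p.1 * z p.2)) 0 = A p.1 p.2 := by simp
        have h1 := hc.eventually_mem (s := {x : ℝ | MemI a x})
          (by rw [show A p.1 p.2 + 0 * (z p.1 * z p.2) = A p.1 p.2 by ring]
              exact memI_nhds (hAe p.1 p.2))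
        exact h1
      filter_upwards [eventually_nhdsWithin_of_eventually_nhds hent,
        self_mem_nhdsWithin] with t hent' ht
      set At : Matrix (Fin n) (Fin n) ℝ :=
        Matrix.of fun i j => A i j + t * (z i * z j) with hAt
      have hAts : At.IsSymm := by
        rw [Matrix.IsSymm]; ext i j
        simp only [hAt, Matrix.transpose_apply, Matrix.of_apply]
        rw [hsymm j i]
        ring
      have hAs : A.IsSymm := by
        rw [Matrix.IsSymm]; ext i j; simp [Matrix.transpose_apply, hsymm i j]
      have hdiffp : (At - A).PosSemidef := by
        have : At - A = t • Matrix.vecMulVec z z := by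
          ext i j
          simp only [hAt, Matrix.sub_apply, Matrix.smul_apply, Matrix.vecMulVec_apply,
            Matrix.of_apply, smul_eq_mul]
          ring
        rw [this]
        exact posSemidef_smul_nonneg (vecMulVec_posSemidef z) (le_of_lt ht)
      have hres := hm At A hAts hAs (fun i j => hent' (i, j)) hAe hA hdiffp
      have hform := hres.dotProduct_mulVec_nonneg (fun _ => 1)
      have hexp : dotProduct (star (fun _ : Fin n => (1:ℝ)))
          ((At.map f - A.map f) *ᵥ (fun _ => 1)) = g t - g 0 := by
        simp only [dotProduct, Matrix.mulVec, Matrix.sub_apply, Matrix.map_apply,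
          star_trivial, hg, hAt, Matrix.of_apply]
        rw [Fintype.sum_prod_type, Fintype.sum_prod_type, ← Finset.sum_sub_distrib]
        refine Finset.sum_congr rfl fun i _ => ?_
        rw [← Finset.sum_sub_distrib]
        simp [dotProduct]
      rw [hexp] at hform
      linarith
    have hdnn : 0 ≤ d := by
      have hslope := hasDerivAt_iff_tendsto_slope_zero.1 hgd
      have hsub : (nhdsWithin (0:ℝ) (Set.Ioi 0)) ≤ (nhdsWithin (0:ℝ) {(0:ℝ)}ᶜ) :=
        nhdsWithin_mono _ (fun t ht => ne_of_gt ht)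
      have h2 := hslope.mono_left hsub
      refine ge_of_tendsto h2 ?_
      filter_upwards [hev, self_mem_nhdsWithin] with t hgt ht
      have ht0 : (0:ℝ) < t := ht
      have : (0:ℝ) ≤ g (0 + t) - g 0 := by
        rw [zero_add]; linarith
      have h3 : (0:ℝ) ≤ t⁻¹ * (g (0 + t) - g 0) := by positivity
      simpa [smul_eq_mul] using h3
    have hfin : dotProduct (star z) ((A.map (deriv f)) *ᵥ z) = d := by
      simp only [dotProduct, Matrix.mulVec, Matrix.map_apply, star_trivial, hd']
      rw [Fintype.sum_prod_type]
      refine Finset.sum_congr rfl fun i _ => ?_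
      rw [Finset.mul_sum]
      refine Finset.sum_congr rfl fun j _ => ?_
      ring
    rw [hfin]
    exact hdnn

lemma schur_form {n : ℕ} {P D : Matrix (Fin n) (Fin n) ℝ} (hP : P.PosSemidef)
    (hD : D.PosSemidef) (y : Fin n → ℝ) :
    0 ≤ ∑ i, ∑ j, y i * (P i j * D i j) * y j := by
  obtain ⟨N, hN⟩ : ∃ N : Matrix (Fin n) (Fin n) ℝ, P = Nᴴ * N := by
    open scoped MatrixOrder Matrix.Norms.L2Operator in exact CStarAlgebra.nonneg_iff_eq_star_mul_self.mp hP.nonneg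
  have hPij : ∀ i j, P i j = ∑ k, N k i * N k j := by
    intro i j
    rw [hN]
    simp [Matrix.mul_apply, Matrix.conjTranspose_apply]
  have hcalc : ∑ i, ∑ j, y i * (P i j * D i j) * y j
      = ∑ k, dotProduct (star (fun i => N k i * y i)) (D *ᵥ (fun i => N k i * y i)) := by
    calc ∑ i, ∑ j, y i * (P i j * D i j) * y j
        = ∑ i, ∑ j, ∑ k, (N k i * y i) * D i j * (N k j * y j) := by
          refine Finset.sum_congr rfl fun i _ => Finset.sum_congr rfl fun j _ => ?_
          rw [hPij i j, Finset.sum_mul, Finset.mul_sum, Finset.sum_mul]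
          refine Finset.sum_congr rfl fun k _ => by ring
    _ = ∑ i, ∑ k, ∑ j, (N k i * y i) * D i j * (N k j * y j) := by
          refine Finset.sum_congr rfl fun i _ => ?_
          rw [Finset.sum_comm]
    _ = ∑ k, ∑ i, ∑ j, (N k i * y i) * D i j * (N k j * y j) := by
          rw [Finset.sum_comm]
    _ = ∑ k, dotProduct (star (fun i => N k i * y i)) (D *ᵥ (fun i => N k i * y i)) := by
          refine Finset.sum_congr rfl fun k _ => ?_
          simp only [dotProduct, Matrix.mulVec, star_trivial]
          refine Finset.sum_congr rfl fun i _ => ?_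
          rw [Finset.mul_sum]
          refine Finset.sum_congr rfl fun j _ => ?_
          ring
  rw [hcalc]
  exact Finset.sum_nonneg fun k _ => hD.dotProduct_mulVec_nonneg _

lemma memI_segment {a : EReal} {u v : ℝ} (hu : MemI a u) (hv : MemI a v) {t : ℝ}
    (h0 : 0 ≤ t) (h1 : t ≤ 1) : MemI a (u + t*(v - u)) := by
  rcases le_total u v with h | h
  · exact memI_of_between hu hv (by nlinarith) (by nlinarith)
  · exact memI_of_between hv hu (by nlinarith) (by nlinarith)

lemma smono_of_diff_spos {a : EReal} {f : ℝ → ℝ} {n : ℕ}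
    (hd : ∀ x : ℝ, MemI a x → DifferentiableAt ℝ f x) (hp : SPos a (deriv f) n) :
    SMono a f n := by
  intro A B hAs hBs hAe hBe hB hAB
  have hsymA : ∀ i j, A j i = A i j := by
    intro i j
    have := congrFun (congrFun hAs i) j
    simpa [Matrix.transpose_apply] using this
  have hsymB : ∀ i j, B j i = B i j := by
    intro i j
    have := congrFun (congrFun hBs i) j
    simpa [Matrix.transpose_apply] using this
  refine Matrix.PosSemidef.of_dotProduct_mulVec_nonneg ?_ ?_
  · rw [Matrix.IsHermitian]
    ext i j
    simp [Matrix.conjTranspose_apply, Matrix.sub_apply, Matrix.map_apply, hsymA i j, hsymB i j]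
  · intro y
    set C : ℝ → Matrix (Fin n) (Fin n) ℝ :=
      fun t => Matrix.of fun i j => B i j + t * (A i j - B i j) with hC
    set g : ℝ → ℝ := fun t =>
      ∑ p : Fin n × Fin n, y p.1 * f (B p.1 p.2 + t * (A p.1 p.2 - B p.1 p.2)) * y p.2 with hg
    set G : ℝ → ℝ := fun t =>
      ∑ p : Fin n × Fin n,
        y p.1 * (deriv f (B p.1 p.2 + t * (A p.1 p.2 - B p.1 p.2))
          * (A p.1 p.2 - B p.1 p.2)) * y p.2 with hG
    have hCe : ∀ t, 0 ≤ t → t ≤ 1 → EntriesIn a (C t) := by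
      intro t h0 h1 i j
      exact memI_segment (hBe i j) (hAe i j) h0 h1
    have hCpsd : ∀ t, 0 ≤ t → (C t).PosSemidef := by
      intro t h0
      have : C t = B + t • (A - B) := by
        ext i j
        simp only [hC, Matrix.of_apply, Matrix.add_apply, Matrix.smul_apply, Matrix.sub_apply,
          smul_eq_mul]
      rw [this]
      exact hB.add (posSemidef_smul_nonneg hAB h0)
    have hgd : ∀ t ∈ Set.Icc (0:ℝ) 1, HasDerivAt g (G t) t := by
      intro t ht
      apply HasDerivAt.fun_sum
      intro p _
      have h1 : HasDerivAt (fun s : ℝ => B p.1 p.2 + s * (A p.1 p.2 - B p.1 p.2))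
          (A p.1 p.2 - B p.1 p.2) t :=
        (hasDerivAt_mul_const (A p.1 p.2 - B p.1 p.2)).const_add (B p.1 p.2)
      have hmem : MemI a (B p.1 p.2 + t * (A p.1 p.2 - B p.1 p.2)) := hCe t ht.1 ht.2 p.1 p.2
      have h2 : HasDerivAt f (deriv f (B p.1 p.2 + t * (A p.1 p.2 - B p.1 p.2)))
          (B p.1 p.2 + t * (A p.1 p.2 - B p.1 p.2)) := (hd _ hmem).hasDerivAt
      exact ((h2.comp t h1).const_mul (y p.1)).mul_const (y p.2)
    have hGnn : ∀ t, 0 ≤ t → t ≤ 1 → 0 ≤ G t := by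
      intro t h0 h1
      have hPpsd : ((C t).map (deriv f)).PosSemidef := hp (C t) (hCe t h0 h1) (hCpsd t h0)
      have h := schur_form hPpsd hAB y
      have heq : ∑ i, ∑ j, y i * (((C t).map (deriv f)) i j * (A - B) i j) * y j = G t := by
        simp only [hG, Fintype.sum_prod_type]
        refine Finset.sum_congr rfl fun i _ => Finset.sum_congr rfl fun j _ => ?_
        simp [Matrix.map_apply, Matrix.sub_apply, hC]
      rwa [heq] at h
    have hmono : MonotoneOn g (Set.Icc (0:ℝ) 1) := by
      apply monotoneOn_of_deriv_nonneg (convex_Icc 0 1)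
      · intro t ht
        exact (hgd t ht).continuousAt.continuousWithinAt
      · intro t ht
        rw [interior_Icc] at ht
        exact ((hgd t ⟨ht.1.le, ht.2.le⟩).differentiableAt).differentiableWithinAt
      · intro t ht
        rw [interior_Icc] at ht
        rw [(hgd t ⟨ht.1.le, ht.2.le⟩).deriv]
        exact hGnn t ht.1.le ht.2.le
    have h01 := hmono (Set.mem_Icc.2 ⟨le_refl 0, zero_le_one⟩)
      (Set.mem_Icc.2 ⟨zero_le_one, le_refl 1⟩) zero_le_one
    have hfin : dotProduct (star y) ((A.map f - B.map f) *ᵥ y) = g 1 - g 0 := by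
      simp only [dotProduct, Matrix.mulVec, Matrix.sub_apply, Matrix.map_apply,
        star_trivial, hg]
      rw [Fintype.sum_prod_type, Fintype.sum_prod_type, ← Finset.sum_sub_distrib]
      refine Finset.sum_congr rfl fun i _ => ?_
      rw [← Finset.sum_sub_distrib, Finset.mul_sum]
      refine Finset.sum_congr rfl fun j _ => ?_
      rw [show B i j + 1 * (A i j - B i j) = A i j by ring,
        show B i j + 0 * (A i j - B i j) = B i j by ring]
      ring
    rw [hfin]
    linarith

/-- Theorem 3.2 (2): for `n ≥ 3`, `f` is S-monotone of order `n` on `(-α, α)` iff `f` is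
differentiable on `(-α, α)` and `f'` is S-positive of order `n`. -/
theorem stmt_9 (a : EReal) (ha : 0 < a) (n : ℕ) (hn : 3 ≤ n) (f : ℝ → ℝ) :
    SMono a f n ↔
      ((∀ x, MemI a x → DifferentiableAt ℝ f x) ∧ SPos a (deriv f) n) := by
  constructor
  · intro h
    have h3 : SMono a f 3 := smono_of_le h (by norm_num) hn
    have h1 : SMono a f 1 := smono_of_le h (by norm_num) (le_trans (by norm_num) hn)
    have hdiff := diffat_all ha h3 h1
    exact ⟨hdiff, spos_deriv_of_smono ha hdiff h⟩
  · rintro ⟨hdiff, hp⟩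
    exact smono_of_diff_spos hdiff hp
end

section
/- Let 0 < α ≤ ∞ and let f be a real function on (-α,α). Write f₀(x) := (f(x)+f(-x))/2 and f₁(x) := (f(x)-f(-x))/2 for the even and odd parts of f. Then f is S-convex if and only if both f₀ and f₁ are S-convex. -/
open Matrix

lemma memI_neg {a : EReal} {x : ℝ} (h : MemI a x) : MemI a (-x) := by
  obtain ⟨h1, h2⟩ := h
  refine ⟨?_, ?_⟩
  · rw [EReal.coe_neg]; exact EReal.neg_lt_neg_iff.mpr h2
  · rw [EReal.coe_neg]; exact EReal.neg_lt_of_neg_lt h1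

lemma herm_of_symm {n : ℕ} {M : Matrix (Fin n) (Fin n) ℝ} (h : M.IsSymm) :
    M.IsHermitian := by
  ext i j
  rw [conjTranspose_apply, star_trivial, ← Matrix.ext_iff.2 h j i]
  rfl

lemma psd_smul {n : ℕ} {M : Matrix (Fin n) (Fin n) ℝ} (h : M.PosSemidef) {c : ℝ}
    (hc : 0 ≤ c) : (c • M).PosSemidef := by
  refine .of_dotProduct_mulVec_nonneg ?_ fun x => ?_
  · ext i j
    simp only [conjTranspose_apply, Matrix.smul_apply, star_trivial, smul_eq_mul]
    rw [show M j i = M i j from by simpa using h.1.apply i j]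
  · have := h.dotProduct_mulVec_nonneg x
    simp only [smul_mulVec, dotProduct_smul, star_trivial, smul_eq_mul] at *
    exact mul_nonneg hc this

lemma block_psd {n : ℕ} {B : Matrix (Fin n) (Fin n) ℝ} (h : B.PosSemidef) :
    (fromBlocks B (-B) (-B) B).PosSemidef := by
  refine .of_dotProduct_mulVec_nonneg ?_ fun x => ?_
  · rw [IsHermitian, fromBlocks_conjTranspose, conjTranspose_neg, h.1.eq]
  · have key := h.dotProduct_mulVec_nonneg (x ∘ Sum.inl - x ∘ Sum.inr)
    have : star x ⬝ᵥ (fromBlocks B (-B) (-B) B *ᵥ x)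
        = star (x ∘ Sum.inl - x ∘ Sum.inr) ⬝ᵥ (B *ᵥ (x ∘ Sum.inl - x ∘ Sum.inr)) := by
      rw [fromBlocks_mulVec]
      nth_rewrite 1 [← Sum.elim_comp_inl_inr x]
      rw [star_trivial, star_trivial, sumElim_dotProduct_sumElim]
      simp only [neg_mulVec, mulVec_sub, dotProduct_add, dotProduct_sub, dotProduct_neg,
        sub_dotProduct]
      ring
    rw [this]; exact key

lemma extract_add {n : ℕ} {P Q : Matrix (Fin n) (Fin n) ℝ}
    (h : (fromBlocks P Q Q P).PosSemidef) (hsym : (P + Q).IsHermitian) :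
    (P + Q).PosSemidef := by
  refine .of_dotProduct_mulVec_nonneg hsym fun v => ?_
  have key := h.dotProduct_mulVec_nonneg (Sum.elim v v)
  rw [fromBlocks_mulVec] at key
  simp only [Sum.elim_comp_inl, Sum.elim_comp_inr, star_trivial] at key
  nth_rewrite 1 [← Sum.elim_comp_inl_inr (Sum.elim v v)] at key
  simp only [Sum.elim_comp_inl, Sum.elim_comp_inr, sumElim_dotProduct_sumElim,
    dotProduct_add] at key
  rw [star_trivial, add_mulVec, dotProduct_add]
  linarith

lemma extract_sub {n : ℕ} {P Q : Matrix (Fin n) (Fin n) ℝ}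
    (h : (fromBlocks P Q Q P).PosSemidef) (hsym : (P - Q).IsHermitian) :
    (P - Q).PosSemidef := by
  refine .of_dotProduct_mulVec_nonneg hsym fun v => ?_
  have key := h.dotProduct_mulVec_nonneg (Sum.elim v (-v))
  rw [fromBlocks_mulVec] at key
  simp only [Sum.elim_comp_inl, Sum.elim_comp_inr, star_trivial] at key
  nth_rewrite 1 [← Sum.elim_comp_inl_inr (Sum.elim v (-v))] at key
  simp only [Sum.elim_comp_inl, Sum.elim_comp_inr, sumElim_dotProduct_sumElim,
    dotProduct_add, mulVec_neg, dotProduct_neg, neg_dotProduct] at key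
  rw [star_trivial, sub_mulVec, dotProduct_sub]
  linarith

lemma key_lemma {a : EReal} {f : ℝ → ℝ} {n : ℕ} (h : SConv a f (n + n))
    (A B : Matrix (Fin n) (Fin n) ℝ) (hA : A.IsSymm) (hB : B.IsSymm)
    (hAe : EntriesIn a A) (hBe : EntriesIn a B) (hBp : B.PosSemidef)
    (hABp : (A - B).PosSemidef) (t : ℝ) (ht0 : 0 ≤ t) (ht1 : t ≤ 1) :
    ((t • A.map f + (1 - t) • B.map f - (t • A + (1 - t) • B).map f) +
      (t • A.map (fun x => f (-x)) + (1 - t) • B.map (fun x => f (-x)) -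
        (t • A + (1 - t) • B).map (fun x => f (-x)))).PosSemidef ∧
    ((t • A.map f + (1 - t) • B.map f - (t • A + (1 - t) • B).map f) -
      (t • A.map (fun x => f (-x)) + (1 - t) • B.map (fun x => f (-x)) -
        (t • A + (1 - t) • B).map (fun x => f (-x)))).PosSemidef := by
  set g : ℝ → ℝ := fun x => f (-x) with hg
  set P : Matrix (Fin n) (Fin n) ℝ :=
    t • A.map f + (1 - t) • B.map f - (t • A + (1 - t) • B).map f with hP
  set Q : Matrix (Fin n) (Fin n) ℝ :=
    t • A.map g + (1 - t) • B.map g - (t • A + (1 - t) • B).map g with hQ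
  set e : Fin n ⊕ Fin n ≃ Fin (n + n) := finSumFinEquiv with he
  set F : Matrix (Fin n ⊕ Fin n) (Fin n ⊕ Fin n) ℝ := fromBlocks A (-A) (-A) A with hF
  set G : Matrix (Fin n ⊕ Fin n) (Fin n ⊕ Fin n) ℝ := fromBlocks B (-B) (-B) B with hG'
  have hFsymm : F.IsSymm := by
    rw [hF, Matrix.IsSymm, fromBlocks_transpose, transpose_neg, hA.eq]
  have hGsymm : G.IsSymm := by
    rw [hG', Matrix.IsSymm, fromBlocks_transpose, transpose_neg, hB.eq]
  have hFent : ∀ p q, MemI a (F p q) := by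
    rintro (p | p) (q | q)
    · exact hAe p q
    · exact memI_neg (hAe p q)
    · exact memI_neg (hAe p q)
    · exact hAe p q
  have hGent : ∀ p q, MemI a (G p q) := by
    rintro (p | p) (q | q)
    · exact hBe p q
    · exact memI_neg (hBe p q)
    · exact memI_neg (hBe p q)
    · exact hBe p q
  have hGpsd : G.PosSemidef := block_psd hBp
  have hFGdiff : F - G = fromBlocks (A - B) (-(A - B)) (-(A - B)) (A - B) := by
    ext (p | p) (q | q) <;> simp [hF, hG'] <;> ring
  have hFGpsd : (F - G).PosSemidef := by rw [hFGdiff]; exact block_psd hABp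
  -- apply SConv at order n + n
  have hM' := h (F.submatrix e.symm e.symm) (G.submatrix e.symm e.symm)
    (hFsymm.submatrix _) (hGsymm.submatrix _)
    (fun i j => hFent _ _) (fun i j => hGent _ _)
    (hGpsd.submatrix _)
    (by
      have : F.submatrix ⇑e.symm ⇑e.symm - G.submatrix ⇑e.symm ⇑e.symm
          = (F - G).submatrix ⇑e.symm ⇑e.symm := by ext i j; simp
      rw [this]; exact hFGpsd.submatrix _)
    t ht0 ht1
  have hEq : t • F.map f + (1 - t) • G.map f - ((t • F + (1 - t) • G).map f)
      = fromBlocks P Q Q P := by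
    ext (p | p) (q | q) <;>
      simp only [hF, hG', hP, hQ, hg, Matrix.sub_apply, Matrix.add_apply, Matrix.smul_apply, map_apply,
        fromBlocks_apply₁₁, fromBlocks_apply₁₂, fromBlocks_apply₂₁, fromBlocks_apply₂₂,
        Matrix.neg_apply, smul_eq_mul] <;> ring_nf
  have h2 : t • (F.submatrix ⇑e.symm ⇑e.symm).map f
      + (1 - t) • (G.submatrix ⇑e.symm ⇑e.symm).map f
      - ((t • F.submatrix ⇑e.symm ⇑e.symm + (1 - t) • G.submatrix ⇑e.symm ⇑e.symm).map f)
      = (fromBlocks P Q Q P).submatrix ⇑e.symm ⇑e.symm := by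
    rw [← hEq]; ext i j; simp
  rw [h2] at hM'
  have hE : (fromBlocks P Q Q P).PosSemidef := by
    have h3 := hM'.submatrix ⇑e
    rwa [show ((fromBlocks P Q Q P).submatrix ⇑e.symm ⇑e.symm).submatrix ⇑e ⇑e
      = fromBlocks P Q Q P from by ext i j; simp] at h3
  have hPsymm : P.IsSymm :=
    ((hA.map f).smul t |>.add ((hB.map f).smul (1 - t))).sub
      (((hA.smul t).add (hB.smul (1 - t))).map f)
  have hQsymm : Q.IsSymm :=
    ((hA.map g).smul t |>.add ((hB.map g).smul (1 - t))).sub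
      (((hA.smul t).add (hB.smul (1 - t))).map g)
  exact ⟨extract_add hE (herm_of_symm (hPsymm.add hQsymm)),
    extract_sub hE (herm_of_symm (hPsymm.sub hQsymm))⟩

/-- Lemma 4.2: `f` is S-convex on `(-α, α)` iff both its even part
`f₀(x) = (f(x) + f(-x))/2` and its odd part `f₁(x) = (f(x) - f(-x))/2` are S-convex. -/
theorem stmt_14 (a : EReal) (ha : 0 < a) (f : ℝ → ℝ) :
    (∀ n : ℕ, SConv a f n) ↔
      ((∀ n : ℕ, SConv a (fun x => (f x + f (-x)) / 2) n) ∧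
       (∀ n : ℕ, SConv a (fun x => (f x - f (-x)) / 2) n)) := by
  constructor
  · intro h
    constructor
    · intro n A B hA hB hAe hBe hBp hABp t ht0 ht1
      obtain ⟨h1, _⟩ := key_lemma (h (n + n)) A B hA hB hAe hBe hBp hABp t ht0 ht1
      have heq : t • A.map (fun x => (f x + f (-x)) / 2)
          + (1 - t) • B.map (fun x => (f x + f (-x)) / 2)
          - (t • A + (1 - t) • B).map (fun x => (f x + f (-x)) / 2)
          = (2⁻¹ : ℝ) • ((t • A.map f + (1 - t) • B.map f - (t • A + (1 - t) • B).map f) +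
            (t • A.map (fun x => f (-x)) + (1 - t) • B.map (fun x => f (-x)) -
              (t • A + (1 - t) • B).map (fun x => f (-x)))) := by
        ext i j
        simp only [Matrix.sub_apply, Matrix.add_apply, Matrix.smul_apply, map_apply, smul_eq_mul]
        ring
      rw [heq]
      exact psd_smul h1 (by norm_num)
    · intro n A B hA hB hAe hBe hBp hABp t ht0 ht1
      obtain ⟨_, h2⟩ := key_lemma (h (n + n)) A B hA hB hAe hBe hBp hABp t ht0 ht1
      have heq : t • A.map (fun x => (f x - f (-x)) / 2)
          + (1 - t) • B.map (fun x => (f x - f (-x)) / 2)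
          - (t • A + (1 - t) • B).map (fun x => (f x - f (-x)) / 2)
          = (2⁻¹ : ℝ) • ((t • A.map f + (1 - t) • B.map f - (t • A + (1 - t) • B).map f) -
            (t • A.map (fun x => f (-x)) + (1 - t) • B.map (fun x => f (-x)) -
              (t • A + (1 - t) • B).map (fun x => f (-x)))) := by
        ext i j
        simp only [Matrix.sub_apply, Matrix.add_apply, Matrix.smul_apply, map_apply, smul_eq_mul]
        ring
      rw [heq]
      exact psd_smul h2 (by norm_num)
  · rintro ⟨h0, h1⟩ n A B hA hB hAe hBe hBp hABp t ht0 ht1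
    have H0 := h0 n A B hA hB hAe hBe hBp hABp t ht0 ht1
    have H1 := h1 n A B hA hB hAe hBe hBp hABp t ht0 ht1
    have heq : t • A.map f + (1 - t) • B.map f - (t • A + (1 - t) • B).map f
        = (t • A.map (fun x => (f x + f (-x)) / 2)
            + (1 - t) • B.map (fun x => (f x + f (-x)) / 2)
            - (t • A + (1 - t) • B).map (fun x => (f x + f (-x)) / 2)) +
          (t • A.map (fun x => (f x - f (-x)) / 2)
            + (1 - t) • B.map (fun x => (f x - f (-x)) / 2)
            - (t • A + (1 - t) • B).map (fun x => (f x - f (-x)) / 2)) := by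
      ext i j
      simp only [Matrix.sub_apply, Matrix.add_apply, Matrix.smul_apply, map_apply, smul_eq_mul]
      ring
    rw [heq]
    exact H0.add H1
end

section
/- Let 0 < α ≤ ∞ and let f be a real function on (-α,α) that is either even (f(-x) = f(x)) or odd (f(-x) = -f(x)). Suppose f is infinitely differentiable on (-α,α) and there exists N ∈ ℕ such that f^(k)(x) ≥ 0 for all x ∈ [0,α) and all k ≥ N. Then the Taylor series of f at 0, ∑_{k=0}^∞ (f^(k)(0)/k!) x^k, converges to f(x) for every x ∈ (-α,α). -/
open Matrix

namespace Stmt15Aux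

open Set Filter Topology

noncomputable def myT (g : ℝ → ℝ) (n : ℕ) (x : ℝ) : ℝ :=
  ∑ k ∈ Finset.range n, iteratedDeriv k g 0 / (Nat.factorial k : ℝ) * x ^ k

noncomputable def myR (g : ℝ → ℝ) (n : ℕ) (x : ℝ) : ℝ := g x - myT g n x

@[simp] lemma myT_zero (g : ℝ → ℝ) (x : ℝ) : myT g 0 x = 0 := by simp [myT]

@[simp] lemma myR_zero (g : ℝ → ℝ) (x : ℝ) : myR g 0 x = g x := by simp [myR]

lemma myT_at_zero (g : ℝ → ℝ) (n : ℕ) : myT g (n + 1) 0 = g 0 := by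
  rw [myT, Finset.sum_eq_single 0]
  · simp
  · intro b _ hb; simp [zero_pow hb]
  · intro h; exact absurd (Finset.mem_range.2 (Nat.succ_pos n)) h

lemma myR_at_zero (g : ℝ → ℝ) (n : ℕ) : myR g (n + 1) 0 = 0 := by
  simp [myR, myT_at_zero]

lemma hasDerivAt_myT (g : ℝ → ℝ) (n : ℕ) (x : ℝ) :
    HasDerivAt (fun t => myT g (n + 1) t) (myT (deriv g) n x) x := by
  have h : HasDerivAt (fun t => myT g (n + 1) t)
      (∑ k ∈ Finset.range (n + 1),
        iteratedDeriv k g 0 / (Nat.factorial k : ℝ) * ((k : ℝ) * x ^ (k - 1))) x := by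
    apply HasDerivAt.fun_sum
    intro k _
    exact (hasDerivAt_pow k x).const_mul _
  convert h using 1
  rw [Finset.sum_range_succ']
  simp only [Nat.cast_zero, zero_mul, mul_zero, add_zero]
  rw [myT]
  apply Finset.sum_congr rfl
  intro i _
  have hfact : ((Nat.factorial (i + 1) : ℝ)) = (i + 1) * (Nat.factorial i : ℝ) := by
    exact_mod_cast Nat.factorial_succ i
  rw [iteratedDeriv_succ', hfact]
  have h1 : (Nat.factorial i : ℝ) ≠ 0 := Nat.cast_ne_zero.2 (Nat.factorial_ne_zero i)
  have h2 : ((i : ℝ) + 1) ≠ 0 := by positivity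
  push_cast
  field_simp

lemma hasDerivAt_myR (g : ℝ → ℝ) (n : ℕ) (x : ℝ) (hg : DifferentiableAt ℝ g x) :
    HasDerivAt (fun t => myR g (n + 1) t) (myR (deriv g) n x) x := by
  simpa [myR] using hg.hasDerivAt.fun_sub (hasDerivAt_myT g n x)

lemma isOpen_S (a : EReal) : IsOpen {x : ℝ | MemI a x} := by
  have : {x : ℝ | MemI a x} = Real.toEReal ⁻¹' (Set.Ioo (-a) a) := by
    ext x; simp [MemI, Set.mem_Ioo]
  rw [this]
  exact isOpen_Ioo.preimage continuous_coe_real_ereal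



def Smo (a : EReal) (g : ℝ → ℝ) : Prop := ∀ k : ℕ, ContDiffOn ℝ k g {x : ℝ | MemI a x}

def Pos (a : EReal) (g : ℝ → ℝ) (n : ℕ) : Prop :=
  ∀ j, n ≤ j → ∀ x : ℝ, 0 ≤ x → (x : EReal) < a → 0 ≤ iteratedDeriv j g x

lemma Smo.deriv {a : EReal} {g : ℝ → ℝ} (hg : Smo a g) : Smo a (deriv g) := by
  intro k
  have h := hg (k + 1)
  have h' : ContDiffOn ℝ ((k : ℕ∞) + 1) g {x : ℝ | MemI a x} := by exact_mod_cast h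
  exact ((contDiffOn_succ_iff_deriv_of_isOpen (isOpen_S a)).1 h').2.2

lemma Smo.contDiffAt {a : EReal} {g : ℝ → ℝ} (hg : Smo a g) {x : ℝ} (hx : MemI a x) (k : ℕ) :
    ContDiffAt ℝ k g x :=
  (hg k).contDiffAt ((isOpen_S a).mem_nhds hx)

lemma Smo.differentiableAt {a : EReal} {g : ℝ → ℝ} (hg : Smo a g) {x : ℝ} (hx : MemI a x) :
    DifferentiableAt ℝ g x :=
  (hg.contDiffAt hx 1).differentiableAt (by norm_num)

lemma Pos.deriv {a : EReal} {g : ℝ → ℝ} {n : ℕ} (hg : Pos a g (n + 1)) : Pos a (deriv g) n := by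
  intro j hj x hx hxa
  have := hg (j + 1) (by omega) x hx hxa
  rwa [iteratedDeriv_succ'] at this

lemma Pos.mono {a : EReal} {g : ℝ → ℝ} {m n : ℕ} (h : m ≤ n) (hg : Pos a g m) : Pos a g n :=
  fun j hj => hg j (le_trans h hj)

lemma memI_of_mem_Icc {a : EReal} (ha : 0 < a) {y t : ℝ} (hy : (y : EReal) < a)
    (ht : t ∈ Set.Icc 0 y) : MemI a t := by
  constructor
  · apply EReal.neg_lt_comm.mpr
    rw [← EReal.coe_neg]
    have h1 : ((-t : ℝ) : EReal) ≤ (0 : EReal) := by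
      exact_mod_cast neg_nonpos.mpr ht.1
    exact lt_of_le_of_lt h1 ha
  · exact lt_of_le_of_lt (EReal.coe_le_coe_iff.mpr ht.2) hy

lemma memI_neg {a : EReal} {x : ℝ} (hx : MemI a x) : MemI a (-x) := by
  constructor
  · rw [EReal.coe_neg]; exact EReal.neg_lt_comm.mpr (by rw [neg_neg]; exact hx.2)
  · rw [EReal.coe_neg]; exact EReal.neg_lt_comm.mp hx.1

lemma le_of_hasDerivAt_nonneg {F F' : ℝ → ℝ} {y : ℝ} (hy : 0 ≤ y)
    (hF : ∀ t ∈ Set.Icc (0:ℝ) y, HasDerivAt F (F' t) t)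
    (hF' : ∀ t ∈ Set.Ioo (0:ℝ) y, 0 ≤ F' t) : F 0 ≤ F y := by
  have hm : MonotoneOn F (Set.Icc 0 y) := by
    apply monotoneOn_of_deriv_nonneg (convex_Icc 0 y)
    · exact fun t ht => (hF t ht).continuousAt.continuousWithinAt
    · rw [interior_Icc]
      exact fun t ht => ((hF t (Set.Ioo_subset_Icc_self ht)).differentiableAt).differentiableWithinAt
    · rw [interior_Icc]
      intro t ht
      rw [(hF t (Set.Ioo_subset_Icc_self ht)).deriv]
      exact hF' t ht
  exact hm (Set.left_mem_Icc.mpr hy) (Set.right_mem_Icc.mpr hy) hy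


lemma myR_nonneg {a : EReal} (ha : 0 < a) :
    ∀ (n : ℕ) (g : ℝ → ℝ), Smo a g → Pos a g n →
      ∀ y : ℝ, 0 ≤ y → (y : EReal) < a → 0 ≤ myR g n y := by
  intro n
  induction n with
  | zero =>
    intro g _ hp y hy hya
    simpa using hp 0 le_rfl y hy hya
  | succ n ih =>
    intro g hs hp y hy hya
    have h := le_of_hasDerivAt_nonneg hy
      (F := fun t => myR g (n + 1) t) (F' := fun t => myR (deriv g) n t)
      (fun t ht => hasDerivAt_myR g n t (hs.differentiableAt (memI_of_mem_Icc ha hya ht)))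
      (fun t ht => ih (deriv g) hs.deriv hp.deriv t ht.1.le
        (lt_trans (EReal.coe_lt_coe_iff.mpr ht.2) hya))
    simpa [myR_at_zero] using h

lemma key {a : EReal} (ha : 0 < a) :
    ∀ (n : ℕ) (g : ℝ → ℝ), Smo a g → Pos a g (n + 1) →
      ∀ y : ℝ, 0 ≤ y → (y : EReal) < a →
      ((n : ℝ) + 1) * myR g (n + 1) y ≤ y * myR (deriv g) n y := by
  intro n
  induction n with
  | zero =>
    intro g hs hp y hy hya
    have h := le_of_hasDerivAt_nonneg hy
      (F := fun t => t * myR (deriv g) 0 t - myR g 1 t)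
      (F' := fun t => (1 * myR (deriv g) 0 t + t * deriv (deriv g) t) - myR (deriv g) 0 t)
      ?_ ?_
    · simp only [myR_at_zero, myR_zero, zero_mul, mul_one, mul_zero, sub_zero, Nat.cast_zero] at h ⊢
      linarith
    · intro t ht
      have hmem := memI_of_mem_Icc ha hya ht
      have h1 : HasDerivAt (fun u => u * myR (deriv g) 0 u)
          (1 * myR (deriv g) 0 t + t * deriv (deriv g) t) t := by
        have hd : HasDerivAt (fun u => myR (deriv g) 0 u) (deriv (deriv g) t) t := by
          have := (hs.deriv.differentiableAt hmem).hasDerivAt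
          simpa [myR_zero] using this
        simpa using (hasDerivAt_id t).fun_mul hd
      have h2 : HasDerivAt (fun u => myR g 1 u) (myR (deriv g) 0 t) t :=
        hasDerivAt_myR g 0 t (hs.differentiableAt hmem)
      exact h1.sub h2
    · intro t ht
      beta_reduce
      have h2 : 0 ≤ iteratedDeriv 2 g t :=
        hp 2 (by omega) t ht.1.le (lt_trans (EReal.coe_lt_coe_iff.mpr ht.2) hya)
      have h2' : iteratedDeriv 2 g t = deriv (deriv g) t := by
        rw [iteratedDeriv_succ', iteratedDeriv_one]
      rw [h2'] at h2
      have ht0 : (0:ℝ) ≤ t := ht.1.le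
      nlinarith [h2, ht0]
  | succ n ih =>
    intro g hs hp y hy hya
    have h := le_of_hasDerivAt_nonneg hy
      (F := fun t => t * myR (deriv g) (n + 1) t - ((n : ℝ) + 2) * myR g (n + 2) t)
      (F' := fun t => (1 * myR (deriv g) (n + 1) t + t * myR (deriv (deriv g)) n t)
        - ((n : ℝ) + 2) * myR (deriv g) (n + 1) t)
      ?_ ?_
    · simp only [myR_at_zero, zero_mul, mul_zero, sub_zero] at h
      have e : n + 1 + 1 = n + 2 := rfl
      rw [e]
      push_cast
      linarith
    · intro t ht
      have hmem := memI_of_mem_Icc ha hya ht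
      have h1 : HasDerivAt (fun u => u * myR (deriv g) (n + 1) u)
          (1 * myR (deriv g) (n + 1) t + t * myR (deriv (deriv g)) n t) t := by
        simpa using (hasDerivAt_id t).fun_mul
          (hasDerivAt_myR (deriv g) n t (hs.deriv.differentiableAt hmem))
      have h2 : HasDerivAt (fun u => myR g (n + 2) u) (myR (deriv g) (n + 1) t) t :=
        hasDerivAt_myR g (n + 1) t (hs.differentiableAt hmem)
      exact h1.sub (h2.const_mul _)
    · intro t ht
      beta_reduce
      have hta : (t : EReal) < a := lt_trans (EReal.coe_lt_coe_iff.mpr ht.2) hya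
      have hih := ih (deriv g) hs.deriv hp.deriv t ht.1.le hta
      linarith


lemma ratio {a : EReal} (ha : 0 < a) (n : ℕ) (g : ℝ → ℝ) (hs : Smo a g) (hp : Pos a g (n + 1))
    {x y : ℝ} (hx : 0 < x) (hxy : x ≤ y) (hya : (y : EReal) < a) :
    myR g (n + 1) x / x ^ (n + 1) ≤ myR g (n + 1) y / y ^ (n + 1) := by
  have hmem : ∀ t ∈ Set.Icc x y, MemI a t := by
    intro t ht
    exact memI_of_mem_Icc ha hya ⟨le_trans hx.le ht.1, ht.2⟩
  have hpos : ∀ t ∈ Set.Icc x y, 0 < t := fun t ht => lt_of_lt_of_le hx ht.1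
  have hD : ∀ t ∈ Set.Icc x y, HasDerivAt (fun u => myR g (n + 1) u / u ^ (n + 1))
      ((myR (deriv g) n t * t ^ (n + 1) - myR g (n + 1) t * ((n + 1 : ℕ) * t ^ n)) /
        (t ^ (n + 1)) ^ 2) t := by
    intro t ht
    have h1 := hasDerivAt_myR g n t (hs.differentiableAt (hmem t ht))
    have h2 : HasDerivAt (fun u : ℝ => u ^ (n + 1)) ((n + 1 : ℕ) * t ^ n) t := by
      simpa using hasDerivAt_pow (n + 1) t
    exact h1.div h2 (pow_ne_zero _ (hpos t ht).ne')
  have hmono : MonotoneOn (fun u => myR g (n + 1) u / u ^ (n + 1)) (Set.Icc x y) := by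
    apply monotoneOn_of_deriv_nonneg (convex_Icc x y)
    · exact fun t ht => (hD t ht).continuousAt.continuousWithinAt
    · rw [interior_Icc]
      exact fun t ht => ((hD t (Set.Ioo_subset_Icc_self ht)).differentiableAt).differentiableWithinAt
    · rw [interior_Icc]
      intro t ht
      rw [(hD t (Set.Ioo_subset_Icc_self ht)).deriv]
      have ht' := Set.Ioo_subset_Icc_self ht
      have ht0 : 0 < t := hpos t ht'
      have hta : (t : EReal) < a := lt_of_le_of_lt (EReal.coe_le_coe_iff.mpr ht'.2) hya
      have hk := key ha n g hs hp t ht0.le hta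
      apply div_nonneg _ (sq_nonneg _)
      have h0 : 0 ≤ t ^ n * (t * myR (deriv g) n t - ((n : ℝ) + 1) * myR g (n + 1) t) :=
        mul_nonneg (pow_nonneg ht0.le n) (by linarith)
      have e : t ^ (n + 1) = t ^ n * t := pow_succ t n
      push_cast
      have e2 : myR (deriv g) n t * t ^ (n + 1) - myR g (n + 1) t * (((n : ℝ) + 1) * t ^ n)
          = t ^ n * (t * myR (deriv g) n t - ((n : ℝ) + 1) * myR g (n + 1) t) := by
        rw [e]; ring
      rw [e2]
      exact h0
  exact hmono (Set.left_mem_Icc.mpr hxy) (Set.right_mem_Icc.mpr hxy) hxy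


lemma exists_between_lt_a {a : EReal} {x : ℝ} (hxa : (x : EReal) < a) :
    ∃ y : ℝ, x < y ∧ (y : EReal) < a := by
  induction a using EReal.rec with
  | bot => exact absurd hxa (by simp)
  | coe r =>
    have hxr : x < r := EReal.coe_lt_coe_iff.mp hxa
    exact ⟨(x + r) / 2, by linarith, by exact_mod_cast (by linarith : (x + r) / 2 < r)⟩
  | top => exact ⟨x + 1, by linarith, EReal.coe_lt_top _⟩

lemma main_nonneg {a : EReal} (ha : 0 < a) (f : ℝ → ℝ) (hs : Smo a f) (N : ℕ) (hp : Pos a f N)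
    {x : ℝ} (hx0 : 0 ≤ x) (hxa : (x : EReal) < a) :
    HasSum (fun k : ℕ => iteratedDeriv k f 0 / (Nat.factorial k : ℝ) * x ^ k) (f x) := by
  rcases eq_or_lt_of_le hx0 with h0 | hx
  · subst h0
    have h := hasSum_single (f := fun k : ℕ =>
      iteratedDeriv k f 0 / (Nat.factorial k : ℝ) * (0 : ℝ) ^ k) 0
      (fun b hb => by simp [zero_pow hb])
    simpa using h
  · obtain ⟨y, hxy, hya⟩ := exists_between_lt_a hxa
    have hy0 : 0 < y := lt_trans hx hxy
    set C := f y - myT f N y with hC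
    have hq0 : 0 < x / y := div_pos hx hy0
    have hq1 : x / y < 1 := (div_lt_one hy0).mpr hxy
    have hcoef : ∀ k, N ≤ k → 0 ≤ iteratedDeriv k f 0 / (Nat.factorial k : ℝ) := by
      intro k hk
      exact div_nonneg (hp k hk 0 le_rfl ha) (by positivity)
    have hub : ∀ m : ℕ, N ≤ m → 1 ≤ m → myR f m x ≤ C * (x / y) ^ m := by
      intro m hNm h1m
      obtain ⟨n, rfl⟩ : ∃ n, m = n + 1 := ⟨m - 1, by omega⟩
      have hpm : Pos a f (n + 1) := hp.mono hNm
      have hr := ratio ha n f hs hpm hx (le_of_lt hxy) hya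
      have hxp : 0 < x ^ (n + 1) := pow_pos hx _
      have hyp : 0 < y ^ (n + 1) := pow_pos hy0 _
      have hr2 := (div_le_div_iff₀ hxp hyp).mp hr
      have h2 : myR f (n + 1) x ≤ myR f (n + 1) y * (x / y) ^ (n + 1) := by
        rw [div_pow, ← mul_div_assoc, le_div_iff₀ hyp]
        linarith
      have h3 : myR f (n + 1) y ≤ C := by
        have hsum : myT f (n + 1) y - myT f N y =
            ∑ k ∈ Finset.Ico N (n + 1), iteratedDeriv k f 0 / (Nat.factorial k : ℝ) * y ^ k :=
          (Finset.sum_Ico_eq_sub _ hNm).symm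
        have hnn : 0 ≤ ∑ k ∈ Finset.Ico N (n + 1),
            iteratedDeriv k f 0 / (Nat.factorial k : ℝ) * y ^ k :=
          Finset.sum_nonneg fun k hk =>
            mul_nonneg (hcoef k (Finset.mem_Ico.mp hk).1) (pow_nonneg hy0.le k)
        rw [← hsum] at hnn
        simp only [myR, hC]
        linarith
      have h4 : 0 ≤ (x / y) ^ (n + 1) := le_of_lt (pow_pos hq0 _)
      calc myR f (n + 1) x ≤ myR f (n + 1) y * (x / y) ^ (n + 1) := h2
        _ ≤ C * (x / y) ^ (n + 1) := mul_le_mul_of_nonneg_right h3 h4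
    have hlb : ∀ m : ℕ, N ≤ m → 0 ≤ myR f m x := fun m hm =>
      myR_nonneg ha m f hs (hp.mono hm) x hx0 hxa
    have hRlim : Filter.Tendsto (fun m => myR f m x) Filter.atTop (nhds 0) := by
      have hC0 : Filter.Tendsto (fun m : ℕ => C * (x / y) ^ m) Filter.atTop (nhds 0) := by
        have h := tendsto_pow_atTop_nhds_zero_of_lt_one hq0.le hq1
        simpa using h.const_mul C
      apply tendsto_of_tendsto_of_tendsto_of_le_of_le' tendsto_const_nhds hC0
      · filter_upwards [Filter.eventually_ge_atTop N] with m hm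
        exact hlb m hm
      · filter_upwards [Filter.eventually_ge_atTop N, Filter.eventually_ge_atTop 1] with m h1 h2
        exact hub m h1 h2
    have hTlim : Filter.Tendsto (fun m => myT f m x) Filter.atTop (nhds (f x)) := by
      have h := Filter.Tendsto.const_sub (f x) hRlim
      simp only [myR, sub_sub_cancel, sub_zero] at h
      exact h
    have hsummable : Summable (fun k : ℕ =>
        iteratedDeriv k f 0 / (Nat.factorial k : ℝ) * x ^ k) := by
      rw [← summable_nat_add_iff N]
      apply summable_of_sum_range_le (c := f x - myT f N x)
      · intro k
        exact mul_nonneg (hcoef (k + N) (Nat.le_add_left N k)) (pow_nonneg hx0 _)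
      · intro n
        have hsplit : ∑ i ∈ Finset.range n,
            (iteratedDeriv (i + N) f 0 / (Nat.factorial (i + N) : ℝ) * x ^ (i + N)) =
            myT f (N + n) x - myT f N x := by
          rw [myT, myT, ← Finset.sum_Ico_eq_sub _ (Nat.le_add_right N n),
            Finset.sum_Ico_eq_sum_range]
          simp only [Nat.add_sub_cancel_left]
          exact Finset.sum_congr rfl fun i _ => by rw [Nat.add_comm N i]
        have hfx : myT f (N + n) x ≤ f x := by
          have h := hlb (N + n) (Nat.le_add_right N n)
          simp only [myR] at h
          linarith
        rw [hsplit]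
        linarith
    have hhs := hsummable.hasSum
    have ht2 := hhs.tendsto_sum_nat
    have heq : (fun n => ∑ i ∈ Finset.range n,
        iteratedDeriv i f 0 / (Nat.factorial i : ℝ) * x ^ i) = fun n => myT f n x := rfl
    rw [heq] at ht2
    have hfinal := tendsto_nhds_unique ht2 hTlim
    rwa [hfinal] at hhs

end Stmt15Aux


/-- Lemma 4.3: let `f` be an even or odd function on `(-α, α)` which is infinitely
differentiable there, and suppose `f⁽ᵏ⁾(x) ≥ 0` for all `x ∈ [0, α)` and all `k ≥ N` for
some `N`. Then the Taylor series of `f` at `0` converges to `f(x)` for every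
`x ∈ (-α, α)`. -/
theorem stmt_15 (a : EReal) (ha : 0 < a) (f : ℝ → ℝ)
    (hpar : (∀ x, MemI a x → f (-x) = f x) ∨ (∀ x, MemI a x → f (-x) = - f x))
    (hsmooth : ∀ k : ℕ, ContDiffOn ℝ k f {x | MemI a x})
    (N : ℕ)
    (hpos : ∀ k : ℕ, N ≤ k → ∀ x : ℝ, 0 ≤ x → (x : EReal) < a → 0 ≤ iteratedDeriv k f x) :
    ∀ x, MemI a x →
      HasSum (fun k : ℕ => (iteratedDeriv k f 0 / (Nat.factorial k : ℝ)) * x ^ k) (f x) := by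
  intro x hxI
  have hS : Stmt15Aux.Smo a f := hsmooth
  have hP : Stmt15Aux.Pos a f N := hpos
  rcases le_or_gt 0 x with hx0 | hxneg
  · exact Stmt15Aux.main_nonneg ha f hS N hP hx0 hxI.2
  · set z := -x with hz
    have hzI : MemI a z := Stmt15Aux.memI_neg hxI
    have hz0 : 0 ≤ z := by rw [hz]; linarith
    have hzsum := Stmt15Aux.main_nonneg ha f hS N hP hz0 hzI.2
    have h0I : MemI a 0 :=
      Stmt15Aux.memI_of_mem_Icc ha (by exact_mod_cast ha) (Set.mem_Icc.mpr ⟨le_rfl, le_rfl⟩)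
    have hxz : x = -z := by rw [hz, neg_neg]
    cases hpar with
    | inl heven =>
      have hEq : Set.EqOn (fun t => f (-t)) f {x : ℝ | MemI a x} := fun t ht => heven t ht
      have hder : ∀ k, iteratedDeriv k (fun t => f (-t)) 0 = iteratedDeriv k f 0 := fun k =>
        hEq.iteratedDeriv_of_isOpen (Stmt15Aux.isOpen_S a) k h0I
      have hodd0 : ∀ k, Odd k → iteratedDeriv k f 0 = 0 := by
        intro k hk
        have h1 := iteratedDeriv_comp_neg k f 0
        rw [hder k, neg_zero, smul_eq_mul, hk.neg_one_pow] at h1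
        linarith
      have hterm : (fun k : ℕ => (iteratedDeriv k f 0 / (Nat.factorial k : ℝ)) * x ^ k)
          = (fun k : ℕ => (iteratedDeriv k f 0 / (Nat.factorial k : ℝ)) * z ^ k) := by
        funext k
        rcases Nat.even_or_odd k with he | ho
        · rw [hxz, he.neg_pow]
        · simp [hodd0 k ho]
      have hfz : f z = f x := by
        have h := heven x hxI
        rw [hz]
        exact h
      rw [hterm, show f x = f z from hfz.symm]
      exact hzsum
    | inr hodd =>
      have hEq : Set.EqOn (fun t => f (-t)) (fun t => -f t) {x : ℝ | MemI a x} :=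
        fun t ht => hodd t ht
      have hder : ∀ k, iteratedDeriv k (fun t => f (-t)) 0 = -(iteratedDeriv k f 0) := by
        intro k
        rw [hEq.iteratedDeriv_of_isOpen (Stmt15Aux.isOpen_S a) k h0I, iteratedDeriv_fun_neg]
      have heven0 : ∀ k, Even k → iteratedDeriv k f 0 = 0 := by
        intro k hk
        have h1 := iteratedDeriv_comp_neg k f 0
        rw [hder k, neg_zero, smul_eq_mul, hk.neg_one_pow] at h1
        linarith
      have hterm : (fun k : ℕ => (iteratedDeriv k f 0 / (Nat.factorial k : ℝ)) * x ^ k)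
          = (fun k : ℕ => -((iteratedDeriv k f 0 / (Nat.factorial k : ℝ)) * z ^ k)) := by
        funext k
        rcases Nat.even_or_odd k with he | ho
        · simp [heven0 k he]
        · rw [hxz, ho.neg_pow]
          ring
      have hfz : f x = -(f z) := by
        have h := hodd x hxI
        rw [hz]
        linarith [h]
      rw [hterm, hfz]
      exact hzsum.neg
end

section
/- Let 0 < α ≤ ∞ and let f be a continuous real function on [0,α) that is continuously differentiable on (0,α). If f(0) ≥ 0 and the derivative f' is convex on (0,α), then the function x ↦ f(x)/x is convex on (0,α). -/
open Matrix
open Set MeasureTheory intervalIntegral Filter Topology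

/-- Lemma 6.2: let `f` be continuous on `[0, α)` and continuously differentiable on
`(0, α)`. If `f(0) ≥ 0` and `f'` is convex on `(0, α)`, then `x ↦ f(x)/x` is convex on
`(0, α)`. -/
theorem stmt_17 (a : EReal) (ha : 0 < a) (f : ℝ → ℝ)
    (hcont : ContinuousOn f {x : ℝ | 0 ≤ x ∧ (x : EReal) < a})
    (hdiff : ∀ x, MemP a x → DifferentiableAt ℝ f x)
    (hderiv : ContinuousOn (deriv f) {x | MemP a x})
    (h0 : 0 ≤ f 0)
    (hconv : ConvexOn ℝ {x | MemP a x} (deriv f)) :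
    ConvexOn ℝ {x | MemP a x} (fun x => f x / x) := by
  set D : Set ℝ := {x | MemP a x} with hDdef
  have hmemD : ∀ {x : ℝ}, x ∈ D → 0 < x ∧ (x : EReal) < a := fun hx => hx
  have hDconv : Convex ℝ D := by
    intro x hx y hy p q hp hq hpq
    obtain ⟨hx1, hx2⟩ := hmemD hx
    obtain ⟨hy1, hy2⟩ := hmemD hy
    constructor
    · simp only [smul_eq_mul]
      have hmin : 0 < min x y := lt_min hx1 hy1
      have h1 : p * min x y ≤ p * x := mul_le_mul_of_nonneg_left (min_le_left x y) hp
      have h2 : q * min x y ≤ q * y := mul_le_mul_of_nonneg_left (min_le_right x y) hq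
      have h3 : p * min x y + q * min x y = min x y := by rw [← add_mul, hpq, one_mul]
      linarith
    · have h1 : p • x + q • y ≤ max x y := by
        simp only [smul_eq_mul]
        nlinarith [le_max_left x y, le_max_right x y]
      have h2 : ((p • x + q • y : ℝ) : EReal) ≤ ((max x y : ℝ) : EReal) :=
        EReal.coe_le_coe_iff.2 h1
      refine lt_of_le_of_lt h2 ?_
      rcases max_cases x y with ⟨h, _⟩ | ⟨h, _⟩ <;> rw [h] <;> assumption
  -- membership of segment points
  have hmem : ∀ w ∈ D, ∀ t ∈ D, ∀ s ∈ Icc (0:ℝ) 1, w + s * (t - w) ∈ D := by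
    intro w hw t ht s hs
    have := hDconv hw ht (by linarith [hs.2] : (0:ℝ) ≤ 1 - s) hs.1 (by ring)
    have heq : (1 - s) • w + s • t = w + s * (t - w) := by simp [smul_eq_mul]; ring
    rwa [heq] at this
  -- continuity of integrand
  have hcontI : ∀ w ∈ D, ∀ t ∈ D,
      ContinuousOn (fun s : ℝ => deriv f (w + s * (t - w))) (Icc 0 1) := by
    intro w hw t ht
    refine hderiv.comp (by fun_prop) ?_
    intro s hs
    exact hmem w hw t ht s hs
  have hint : ∀ w ∈ D, ∀ t ∈ D,
      IntervalIntegrable (fun s : ℝ => deriv f (w + s * (t - w))) volume 0 1 := by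
    intro w hw t ht
    have h := hcontI w hw t ht
    rw [show Icc (0:ℝ) 1 = uIcc 0 1 from (uIcc_of_le zero_le_one).symm] at h
    exact h.intervalIntegrable
  -- FTC
  have key : ∀ w ∈ D, ∀ t ∈ D,
      f t - f w = (t - w) * ∫ s in (0:ℝ)..1, deriv f (w + s * (t - w)) := by
    intro w hw t ht
    have hd : ∀ s ∈ uIcc (0:ℝ) 1,
        HasDerivAt (fun s : ℝ => f (w + s * (t - w)))
          ((t - w) * deriv f (w + s * (t - w))) s := by
      intro s hs
      rw [uIcc_of_le zero_le_one] at hs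
      have hpt : w + s * (t - w) ∈ D := hmem w hw t ht s hs
      have hinner : HasDerivAt (fun s : ℝ => w + s * (t - w)) (t - w) s := by
        simpa using ((hasDerivAt_id s).mul_const (t - w)).const_add w
      have houter : HasDerivAt f (deriv f (w + s * (t - w))) (w + s * (t - w)) :=
        (hdiff _ hpt).hasDerivAt
      have := HasDerivAt.comp s houter hinner
      simpa [mul_comm, Function.comp_def] using this
    have hint' : IntervalIntegrable
        (fun s : ℝ => (t - w) * deriv f (w + s * (t - w))) volume 0 1 :=
      (hint w hw t ht).const_mul _
    have := integral_eq_sub_of_hasDerivAt hd hint'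
    rw [intervalIntegral.integral_const_mul] at this
    rw [this]; norm_num
  -- convexity of the averaged derivative
  have hQconv : ∀ w ∈ D, ∀ x ∈ D, ∀ y ∈ D, ∀ p q : ℝ, 0 ≤ p → 0 ≤ q → p + q = 1 →
      (∫ s in (0:ℝ)..1, deriv f (w + s * (p * x + q * y - w))) ≤
        p * (∫ s in (0:ℝ)..1, deriv f (w + s * (x - w))) +
        q * (∫ s in (0:ℝ)..1, deriv f (w + s * (y - w))) := by
    intro w hw x hx y hy p q hp hq hpq
    have hzD : (p * x + q * y) ∈ D := by
      have := hDconv hx hy hp hq hpq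
      simpa [smul_eq_mul] using this
    have hintz := hint w hw _ hzD
    have hintx := (hint w hw x hx).const_mul p
    have hinty := (hint w hw y hy).const_mul q
    have hmono : (∫ s in (0:ℝ)..1, deriv f (w + s * (p * x + q * y - w))) ≤
        ∫ s in (0:ℝ)..1,
          (p * deriv f (w + s * (x - w)) + q * deriv f (w + s * (y - w))) := by
      refine intervalIntegral.integral_mono_on zero_le_one hintz (hintx.add hinty) ?_
      intro s hs
      have hx' : w + s * (x - w) ∈ D := hmem w hw x hx s hs
      have hy' : w + s * (y - w) ∈ D := hmem w hw y hy s hs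
      have := hconv.2 hx' hy' hp hq hpq
      have heq : p • (w + s * (x - w)) + q • (w + s * (y - w))
          = w + s * (p * x + q * y - w) := by
        simp only [smul_eq_mul]; linear_combination (w - s * w) * hpq
      rw [heq] at this
      simpa [smul_eq_mul] using this
    calc (∫ s in (0:ℝ)..1, deriv f (w + s * (p * x + q * y - w)))
        ≤ _ := hmono
      _ = p * (∫ s in (0:ℝ)..1, deriv f (w + s * (x - w))) +
          q * (∫ s in (0:ℝ)..1, deriv f (w + s * (y - w))) := by
          rw [intervalIntegral.integral_add ((hint w hw x hx).const_mul p)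
            ((hint w hw y hy).const_mul q),
            intervalIntegral.integral_const_mul, intervalIntegral.integral_const_mul]
  -- slope form
  have hslope : ∀ w ∈ D, ∀ t ∈ D, w ≠ t →
      (f t - f w) / (t - w) = ∫ s in (0:ℝ)..1, deriv f (w + s * (t - w)) := by
    intro w hw t ht hne
    rw [key w hw t ht]
    exact mul_div_cancel_left₀ _ (sub_ne_zero.2 (Ne.symm hne))
  -- the core convexity
  have hq : ConvexOn ℝ D (fun t => (f t - f 0) / t) := by
    refine ⟨hDconv, ?_⟩
    intro x hx y hy p q hp hq1 hpq
    simp only [smul_eq_mul]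
    set z := p * x + q * y with hz
    have hzD : z ∈ D := by
      have := hDconv hx hy hp hq1 hpq
      simpa [smul_eq_mul, hz] using this
    set m := min x (min y z) with hm
    have hm0 : 0 < m := lt_min (hmemD hx).1 (lt_min (hmemD hy).1 (hmemD hzD).1)
    have hsubD : Ioo (0:ℝ) m ⊆ D := by
      intro w hw
      refine ⟨hw.1, ?_⟩
      have : w < x := lt_of_lt_of_le hw.2 (min_le_left _ _)
      exact lt_trans (EReal.coe_lt_coe_iff.2 this) (hmemD hx).2
    have hls : Filter.NeBot (𝓝[Ioo (0:ℝ) m] 0) := left_nhdsWithin_Ioo_neBot hm0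
    -- eventual inequality
    have hev : ∀ w ∈ Ioo (0:ℝ) m,
        (f z - f w) / (z - w) ≤ p * ((f x - f w) / (x - w)) + q * ((f y - f w) / (y - w)) := by
      intro w hw
      have hwD : w ∈ D := hsubD hw
      have hwx : w ≠ x := ne_of_lt (lt_of_lt_of_le hw.2 (min_le_left _ _))
      have hwy : w ≠ y := ne_of_lt (lt_of_lt_of_le hw.2 (le_trans (min_le_right _ _) (min_le_left _ _)))
      have hwz : w ≠ z := ne_of_lt (lt_of_lt_of_le hw.2 (le_trans (min_le_right _ _) (min_le_right _ _)))
      rw [hslope w hwD x hx hwx, hslope w hwD y hy hwy, hslope w hwD z hzD hwz]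
      exact hQconv w hwD x hx y hy p q hp hq1 hpq
    -- limits
    have hf0 : Filter.Tendsto f (𝓝[Ioo (0:ℝ) m] 0) (𝓝 (f 0)) := by
      have h1 : ContinuousWithinAt f {x : ℝ | 0 ≤ x ∧ (x : EReal) < a} 0 :=
        hcont 0 ⟨le_refl 0, by exact_mod_cast ha⟩
      refine h1.tendsto.mono_left (nhdsWithin_mono 0 ?_)
      intro w hw
      exact ⟨(hsubD hw).1.le, (hsubD hw).2⟩
    have hwid : Filter.Tendsto (fun w : ℝ => w) (𝓝[Ioo (0:ℝ) m] 0) (𝓝 0) :=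
      tendsto_id.mono_left nhdsWithin_le_nhds
    have hlim : ∀ t ∈ D, Filter.Tendsto (fun w => (f t - f w) / (t - w))
        (𝓝[Ioo (0:ℝ) m] 0) (𝓝 ((f t - f 0) / t)) := by
      intro t ht
      have hne : t - (0:ℝ) ≠ 0 := by
        have := (hmemD ht).1; intro h; rw [sub_zero] at h; exact this.ne' h
      have := ((tendsto_const_nhds.sub hf0).div
        (tendsto_const_nhds.sub hwid) hne :
        Filter.Tendsto (fun w => (f t - f w) / (t - w)) (𝓝[Ioo (0:ℝ) m] 0)
          (𝓝 ((f t - f 0) / (t - 0))))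
      rw [sub_zero] at this; exact this
    have hL := hlim z hzD
    have hR := ((hlim x hx).const_mul p).add ((hlim y hy).const_mul q)
    refine le_of_tendsto_of_tendsto hL hR ?_
    filter_upwards [self_mem_nhdsWithin] with w hw
    exact hev w hw
  -- inverse part
  have hinv : ConvexOn ℝ D (fun t => f 0 * t⁻¹) := by
    have h1 : ConvexOn ℝ (Ioi (0:ℝ)) (fun t : ℝ => t ^ (-1 : ℤ)) := convexOn_zpow (-1)
    have h2 : ConvexOn ℝ D (fun t : ℝ => t ^ (-1 : ℤ)) :=
      h1.subset (fun x hx => (hmemD hx).1) hDconv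
    have h3 := h2.smul h0
    have heq : (fun t : ℝ => f 0 • t ^ (-1 : ℤ)) = fun t : ℝ => f 0 * t⁻¹ := by
      funext t; simp [_root_.zpow_neg, smul_eq_mul]
    rwa [heq] at h3
  have := hq.add hinv
  have heq : (fun t : ℝ => (f t - f 0) / t + f 0 * t⁻¹) = fun t : ℝ => f t / t := by
    funext t
    rw [← div_eq_mul_inv, ← add_div, sub_add_cancel]
  have h2 : (fun t : ℝ => (f t - f 0) / t + f 0 * t⁻¹)
      = (fun t : ℝ => (f t - f 0) / t) + (fun t : ℝ => f 0 * t⁻¹) := rfl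
  rw [← h2, heq] at this
  exact this
end
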